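/- arXiv:2501.07292 — 5 statements merged into one kernel-verified Lean document; each statement's English description precedes it below -/
import Mathlib

section
/- Let ρ and σ be positive semidefinite Hermitian matrices on ℂ^d with supp(ρ) ⊆ supp(σ), and let t ∈ (0,1]. Then D_{f_t}(ρ‖σ) = inf_Z (1/t)·( tr[ρ] + tr[ρ(Z+Z†)] + (1−t)·tr[ρ Z†Z] + t·tr[σ Z Z†] ), where the infimum is taken over all d×d complex matrices Z. -/
noncomputable section

namespace QRE

open scoped ComplexOrder

open Matrix

variable {d : ℕ}

/-- The rank-one projector `|u⟩⟨u|` associated with a vector `u ∈ ℂ^d`. -/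
def rankOne (u : EuclideanSpace ℂ (Fin d)) : Matrix (Fin d) (Fin d) ℂ :=
  Matrix.of fun i j => u i * (starRingEnd ℂ) (u j)

/-- Functional calculus on the support of a Hermitian matrix: apply `g` to the
positive eigenvalues, and `0` to the rest. -/
def matFun (g : ℝ → ℝ) {A : Matrix (Fin d) (Fin d) ℂ} (hA : A.IsHermitian) :
    Matrix (Fin d) (Fin d) ℂ :=
  ∑ j, (if 0 < hA.eigenvalues j then (g (hA.eigenvalues j) : ℂ) else 0) •
    rankOne (hA.eigenvectorBasis j)

/-- The orthogonal projection onto the support (column space) of a Hermitian matrix. -/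
def suppProj {A : Matrix (Fin d) (Fin d) ℂ} (hA : A.IsHermitian) :
    Matrix (Fin d) (Fin d) ℂ :=
  matFun (fun _ => 1) hA

/-- The standard quantum `f`-divergence (for `supp ρ ⊆ supp σ`, where the `f(0⁺)` term
vanishes): `D_f(ρ‖σ) = Σ_{j : η_j > 0} Σ_{k : μ_k > 0} η_j f(μ_k/η_j) tr[P_j Q_k]`. -/
def Df (f : ℝ → ℝ) {ρ σ : Matrix (Fin d) (Fin d) ℂ}
    (hρ : ρ.IsHermitian) (hσ : σ.IsHermitian) : ℝ :=
  ∑ j, ∑ k,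
    if 0 < hρ.eigenvalues j ∧ 0 < hσ.eigenvalues k then
      hρ.eigenvalues j * f (hσ.eigenvalues k / hρ.eigenvalues j) *
        (Matrix.trace (rankOne (hρ.eigenvectorBasis j) *
          rankOne (hσ.eigenvectorBasis k))).re
    else 0

/-- `f_t(x) = (x-1)/(t(x-1)+1)`. -/
def ft (t x : ℝ) : ℝ := (x - 1) / (t * (x - 1) + 1)

/-- A quantum state: positive semidefinite with unit trace. -/
def IsState (ρ : Matrix (Fin d) (Fin d) ℂ) : Prop := ρ.PosSemidef ∧ ρ.trace = 1

/-- The Umegaki relative entropy `tr[ρ (log₂ ρ − log₂ σ)]` (logs on the supports). -/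
def relEnt {ρ σ : Matrix (Fin d) (Fin d) ℂ} (hρ : ρ.IsHermitian) (hσ : σ.IsHermitian) : ℝ :=
  (Matrix.trace (ρ * (matFun (Real.logb 2) hρ - matFun (Real.logb 2) hσ))).re

/-- `Q_α(ρ‖σ) = tr[ρ^α σ^{1-α}]`, matrix powers by functional calculus on the support. -/
def Qalpha (α : ℝ) {ρ σ : Matrix (Fin d) (Fin d) ℂ}
    (hρ : ρ.IsHermitian) (hσ : σ.IsHermitian) : ℝ :=
  (Matrix.trace (matFun (fun y => y ^ α) hρ * matFun (fun y => y ^ (1 - α)) hσ)).re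

/-- `Q₀(ρ‖σ) = tr[ρ⁰ σ]`. -/
def Qzero {ρ : Matrix (Fin d) (Fin d) ℂ} (hρ : ρ.IsHermitian)
    (σ : Matrix (Fin d) (Fin d) ℂ) : ℝ :=
  (Matrix.trace (suppProj hρ * σ)).re

/-- `Q₂(ρ‖σ) = tr[ρ² σ⁺]`, with `σ⁺` the Moore–Penrose pseudo-inverse of `σ`. -/
def Qtwo (ρ : Matrix (Fin d) (Fin d) ℂ) {σ : Matrix (Fin d) (Fin d) ℂ}
    (hσ : σ.IsHermitian) : ℝ :=
  (Matrix.trace (ρ * ρ * matFun (fun y => y⁻¹) hσ)).re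

end QRE

-- Auxiliary lemmas
namespace QRE
open Matrix
open scoped ComplexOrder
variable {d : ℕ}

lemma rankOne_mulVec (u : EuclideanSpace ℂ (Fin d)) (x : Fin d → ℂ) :
    rankOne u *ᵥ x = (star (⇑u) ⬝ᵥ x) • (⇑u : Fin d → ℂ) := by
  funext i
  simp [rankOne, mulVec, dotProduct, Finset.mul_sum, mul_comm, mul_left_comm]

lemma dot_conj (x y : Fin d → ℂ) : star x ⬝ᵥ y = (starRingEnd ℂ) (star y ⬝ᵥ x) := by
  simp [dotProduct, mul_comm]

lemma onb_dot (b : OrthonormalBasis (Fin d) ℂ (EuclideanSpace ℂ (Fin d))) (i j : Fin d) :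
    star (⇑(b i)) ⬝ᵥ (⇑(b j) : Fin d → ℂ) = if i = j then 1 else 0 := by
  have := orthonormal_iff_ite.mp b.orthonormal i j
  simpa [EuclideanSpace.inner_eq_star_dotProduct, dotProduct_comm (⇑(b j) : Fin d → ℂ)] using this

lemma onb_delta (b : OrthonormalBasis (Fin d) ℂ (EuclideanSpace ℂ (Fin d))) (i j : Fin d) :
    ∑ k, b k i * (starRingEnd ℂ) (b k j) = if i = j then 1 else 0 := by
  set U : Matrix (Fin d) (Fin d) ℂ := Matrix.of fun i k => b k i with hU
  have h1 : Uᴴ * U = 1 := by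
    ext k l
    have := onb_dot b k l
    simpa [hU, Matrix.mul_apply, conjTranspose_apply, dotProduct, Matrix.one_apply] using this
  have h2 : U * Uᴴ = 1 := mul_eq_one_comm.mp h1
  have := congrFun (congrFun h2 i) j
  simpa [hU, Matrix.mul_apply, conjTranspose_apply, Matrix.one_apply] using this

lemma completeness (b : OrthonormalBasis (Fin d) ℂ (EuclideanSpace ℂ (Fin d)))
    (x y : Fin d → ℂ) :
    star x ⬝ᵥ y = ∑ k, (star x ⬝ᵥ (⇑(b k) : Fin d → ℂ)) * (star (⇑(b k)) ⬝ᵥ y) := by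
  have : ∀ k, (star x ⬝ᵥ (⇑(b k) : Fin d → ℂ)) * (star (⇑(b k)) ⬝ᵥ y)
      = ∑ i, ∑ j, ((starRingEnd ℂ) (x i) * y j) * (b k i * (starRingEnd ℂ) (b k j)) := by
    intro k
    simp only [dotProduct, Finset.sum_mul_sum, Pi.star_apply, RCLike.star_def]
    exact Finset.sum_congr rfl fun i _ => Finset.sum_congr rfl fun j _ => by ring
  rw [Finset.sum_congr rfl fun k _ => this k]
  rw [Finset.sum_comm]
  have : ∀ i, ∑ k, ∑ j, ((starRingEnd ℂ) (x i) * y j) * (b k i * (starRingEnd ℂ) (b k j))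
      = (starRingEnd ℂ) (x i) * y i := by
    intro i
    rw [Finset.sum_comm]
    have : ∀ j, ∑ k, ((starRingEnd ℂ) (x i) * y j) * (b k i * (starRingEnd ℂ) (b k j))
        = ((starRingEnd ℂ) (x i) * y j) * (if i = j then 1 else 0) := by
      intro j; rw [← Finset.mul_sum, onb_delta]
    rw [Finset.sum_congr rfl fun j _ => this j]
    simp
  rw [Finset.sum_congr rfl fun i _ => this i]
  simp [dotProduct]

end QRE

namespace QRE
open Matrix
variable {d : ℕ}

lemma sum_rankOne_onb (b : OrthonormalBasis (Fin d) ℂ (EuclideanSpace ℂ (Fin d))) :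
    ∑ k, rankOne (b k) = 1 := by
  ext i j
  simpa [rankOne, Matrix.sum_apply, Matrix.one_apply] using onb_delta b i j

lemma mul_rankOne (M : Matrix (Fin d) (Fin d) ℂ) (u : EuclideanSpace ℂ (Fin d)) :
    M * rankOne u = Matrix.of fun i j => (M *ᵥ ⇑u) i * (starRingEnd ℂ) (u j) := by
  ext i j
  simp [Matrix.mul_apply, rankOne, mulVec, dotProduct, Finset.sum_mul, mul_assoc]

lemma spectral {A : Matrix (Fin d) (Fin d) ℂ} (hA : A.IsHermitian) :
    A = ∑ j, (hA.eigenvalues j : ℂ) • rankOne (hA.eigenvectorBasis j) := by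
  calc A = A * ∑ k, rankOne (hA.eigenvectorBasis k) := by rw [sum_rankOne_onb, mul_one]
    _ = ∑ k, A * rankOne (hA.eigenvectorBasis k) := Finset.mul_sum _ _ _
    _ = _ := Finset.sum_congr rfl fun k _ => by
        rw [mul_rankOne, hA.mulVec_eigenvectorBasis]
        ext i j
        simp [rankOne, Complex.real_smul, mul_assoc]

lemma trace_rankOne_mul (u : EuclideanSpace ℂ (Fin d)) (M : Matrix (Fin d) (Fin d) ℂ) :
    Matrix.trace (rankOne u * M) = star (⇑u) ⬝ᵥ (M *ᵥ ⇑u) := by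
  simp only [Matrix.trace, Matrix.diag_apply, Matrix.mul_apply, rankOne, Matrix.of_apply,
    dotProduct, mulVec, Pi.star_apply, RCLike.star_def, Finset.mul_sum]
  rw [Finset.sum_comm]
  exact Finset.sum_congr rfl fun i _ => Finset.sum_congr rfl fun j _ => by ring

lemma trace_hermitian_mul {A : Matrix (Fin d) (Fin d) ℂ} (hA : A.IsHermitian)
    (M : Matrix (Fin d) (Fin d) ℂ) :
    Matrix.trace (A * M) =
      ∑ j, (hA.eigenvalues j : ℂ) *
        (star (⇑(hA.eigenvectorBasis j)) ⬝ᵥ (M *ᵥ ⇑(hA.eigenvectorBasis j))) := by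
  conv_lhs => rw [spectral hA]
  rw [Finset.sum_mul, Matrix.trace_sum]
  exact Finset.sum_congr rfl fun j _ => by
    rw [Matrix.smul_mul, Matrix.trace_smul, trace_rankOne_mul, smul_eq_mul]

lemma dot_conjTranspose_mulVec (M : Matrix (Fin d) (Fin d) ℂ) (x y : Fin d → ℂ) :
    star x ⬝ᵥ (Mᴴ *ᵥ y) = star (M *ᵥ x) ⬝ᵥ y := by
  simp only [dotProduct, mulVec, conjTranspose_apply, Pi.star_apply, RCLike.star_def,
    map_sum, Finset.mul_sum, Finset.sum_mul]
  rw [Finset.sum_comm]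
  exact Finset.sum_congr rfl fun i _ => Finset.sum_congr rfl fun j _ => by
    rw [_root_.map_mul]; ring

lemma trace_eq_sum_eig {A : Matrix (Fin d) (Fin d) ℂ} (hA : A.IsHermitian) :
    Matrix.trace A = ∑ j, (hA.eigenvalues j : ℂ) := by
  conv_lhs => rw [spectral hA]
  rw [Matrix.trace_sum]
  refine Finset.sum_congr rfl fun j _ => ?_
  rw [Matrix.trace_smul, smul_eq_mul]
  have h := onb_dot hA.eigenvectorBasis j j
  rw [if_pos rfl] at h
  have : Matrix.trace (rankOne (hA.eigenvectorBasis j)) = 1 := by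
    rw [← h]
    simp [Matrix.trace, rankOne, dotProduct, mul_comm]
  rw [this, mul_one]

end QRE

namespace QRE

lemma normSq_expand (a η : ℝ) (w c : ℂ) :
    Complex.normSq (((a : ℝ) : ℂ) * w + ((η : ℝ) : ℂ) * (starRingEnd ℂ) c) =
      a^2 * Complex.normSq w + η^2 * Complex.normSq c + 2*a*η*(c*w).re := by
  simp only [Complex.normSq_apply, Complex.mul_re, Complex.mul_im, Complex.add_re,
    Complex.add_im, Complex.ofReal_re, Complex.ofReal_im, Complex.conj_re, Complex.conj_im]
  ring

lemma hft_val {t η μ : ℝ} (ht : 0 < t) (ht1 : t ≤ 1) (hη : 0 < η) (hμ : 0 < μ) :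
    ft t (μ/η) = (μ - η) / ((1-t)*η + t*μ) := by
  have ha : 0 < (1-t)*η + t*μ := by nlinarith
  have h1 : t * (μ/η - 1) + 1 = ((1-t)*η + t*μ)/η := by field_simp; ring
  simp only [ft, h1]
  rw [div_eq_div_iff (by positivity) (ne_of_gt ha)]
  field_simp

lemma scalar_ineq {t : ℝ} (ht : 0 < t) (ht1 : t ≤ 1) {η μ : ℝ} (hη : 0 ≤ η) (hμ : 0 ≤ μ)
    (c w : ℂ) (hc : 0 < η → ¬ 0 < μ → c = 0) :
    (if 0 < η ∧ 0 < μ then η * ft t (μ / η) * Complex.normSq c else 0) ≤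
      (1/t) * (η * Complex.normSq c + 2 * η * (c * w).re +
        ((1-t)*η + t*μ) * Complex.normSq w) := by
  by_cases hη' : 0 < η
  · by_cases hμ' : 0 < μ
    · rw [if_pos ⟨hη', hμ'⟩, hft_val ht ht1 hη' hμ']
      have ha : 0 < (1-t)*η + t*μ := by nlinarith
      have key : (1/t) * (η * Complex.normSq c + 2 * η * (c * w).re +
            ((1-t)*η + t*μ) * Complex.normSq w) - η * ((μ - η) / ((1-t)*η + t*μ)) * Complex.normSq c
          = (1/(t*((1-t)*η + t*μ))) *
            Complex.normSq ((((1-t)*η + t*μ : ℝ) : ℂ) * w + ((η : ℝ) : ℂ) * (starRingEnd ℂ) c) := by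
        rw [normSq_expand]
        have h1 : ((1-t)*η + t*μ) * ((1-t)*η + t*μ)⁻¹ = 1 := mul_inv_cancel₀ ha.ne'
        have h2 : t * t⁻¹ = 1 := mul_inv_cancel₀ ht.ne'
        rw [one_div (t * _), mul_inv]
        linear_combination (-t⁻¹*((1-t)*η + t*μ)*Complex.normSq w - 2*t⁻¹*η*(c*w).re
          - t⁻¹*η*Complex.normSq c) * h1 + (η*Complex.normSq c*(μ-η)*((1-t)*η + t*μ)⁻¹) * h2
      have h0 : 0 ≤ (1/(t*((1-t)*η + t*μ))) *
          Complex.normSq ((((1-t)*η + t*μ : ℝ) : ℂ) * w + ((η : ℝ) : ℂ) * (starRingEnd ℂ) c) :=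
        mul_nonneg (by positivity) (Complex.normSq_nonneg _)
      linarith [key ▸ h0]
    · rw [if_neg (fun h => hμ' h.2), hc hη' hμ']
      have hμ0 : μ = 0 := le_antisymm (not_lt.mp hμ') hμ
      subst hμ0
      simp only [Complex.normSq_zero, zero_mul, Complex.zero_re, mul_zero, add_zero, zero_add]
      exact mul_nonneg (by positivity)
        (mul_nonneg (mul_nonneg (by linarith) hη) (Complex.normSq_nonneg w))
  · have hη0 : η = 0 := le_antisymm (not_lt.mp hη') hη
    subst hη0
    rw [if_neg (fun h => hη' h.1)]
    simp only [zero_mul, mul_zero, zero_add, add_zero]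
    exact mul_nonneg (by positivity)
      (mul_nonneg (mul_nonneg ht.le hμ) (Complex.normSq_nonneg w))

end QRE

namespace QRE

def wopt (t η μ : ℝ) (c : ℂ) : ℂ :=
  if 0 < (1-t)*η + t*μ then ((-(η/((1-t)*η + t*μ)) : ℝ) : ℂ) * (starRingEnd ℂ) c else 0

lemma scalar_eq {t : ℝ} (ht : 0 < t) (ht1 : t ≤ 1) {η μ : ℝ} (hη : 0 ≤ η) (hμ : 0 ≤ μ)
    (c : ℂ) (hc : 0 < η → ¬ 0 < μ → c = 0) :
    (if 0 < η ∧ 0 < μ then η * ft t (μ / η) * Complex.normSq c else 0) =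
      (1/t) * (η * Complex.normSq c + 2 * η * (c * wopt t η μ c).re +
        ((1-t)*η + t*μ) * Complex.normSq (wopt t η μ c)) := by
  by_cases hη' : 0 < η
  · by_cases hμ' : 0 < μ
    · have ha : 0 < (1-t)*η + t*μ := by nlinarith
      set a := (1-t)*η + t*μ with ha_def
      have hw : wopt t η μ c = ((-(η/a) : ℝ) : ℂ) * (starRingEnd ℂ) c := by
        rw [wopt, if_pos ha]
      have hre : (c * wopt t η μ c).re = -(η/a) * Complex.normSq c := by
        rw [hw, mul_left_comm, Complex.mul_conj, ← Complex.ofReal_mul]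
        exact Complex.ofReal_re _
      have hns : Complex.normSq (wopt t η μ c) = (η/a)^2 * Complex.normSq c := by
        rw [hw, Complex.normSq_mul, Complex.normSq_conj, Complex.normSq_ofReal]
        ring
      rw [if_pos ⟨hη', hμ'⟩, hft_val ht ht1 hη' hμ', ← ha_def, hre, hns]
      field_simp
      ring
    · have hc0 : c = 0 := hc hη' hμ'
      have hw : wopt t η μ c = 0 := by
        rw [wopt, hc0]; simp
      rw [if_neg (fun h => hμ' h.2), hw, hc0]
      simp
  · have hη0 : η = 0 := le_antisymm (not_lt.mp hη') hη
    subst hη0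
    have hw : wopt t 0 μ c = 0 := by
      rw [wopt]; split <;> simp
    rw [if_neg (fun h => hη' h.1), hw]
    simp

end QRE

namespace QRE
open Matrix
variable {d : ℕ}

lemma dot_self_eq (b : OrthonormalBasis (Fin d) ℂ (EuclideanSpace ℂ (Fin d))) (x : Fin d → ℂ) :
    star x ⬝ᵥ x = ∑ k, (Complex.normSq (star (⇑(b k)) ⬝ᵥ x) : ℂ) := by
  rw [completeness b x x]
  refine Finset.sum_congr rfl fun k _ => ?_
  rw [dot_conj x (⇑(b k)), mul_comm, Complex.mul_conj]

/-- Trace of ρ in terms of eigenvalues and overlaps. -/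
lemma traceA {ρ : Matrix (Fin d) (Fin d) ℂ} (hρ : ρ.IsHermitian)
    (b : OrthonormalBasis (Fin d) ℂ (EuclideanSpace ℂ (Fin d))) :
    (Matrix.trace ρ).re = ∑ j, ∑ k, hρ.eigenvalues j *
      Complex.normSq (star (⇑(hρ.eigenvectorBasis j)) ⬝ᵥ (⇑(b k) : Fin d → ℂ)) := by
  rw [trace_eq_sum_eig hρ, Complex.re_sum]
  refine Finset.sum_congr rfl fun j _ => ?_
  rw [Complex.ofReal_re, ← Finset.mul_sum]
  have h1 : star (⇑(hρ.eigenvectorBasis j)) ⬝ᵥ (⇑(hρ.eigenvectorBasis j) : Fin d → ℂ) = 1 := by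
    simpa using onb_dot hρ.eigenvectorBasis j j
  have h2 := dot_self_eq b (⇑(hρ.eigenvectorBasis j))
  rw [h1] at h2
  have h3 : (1:ℝ) = ∑ k, Complex.normSq
      (star (⇑(b k)) ⬝ᵥ (⇑(hρ.eigenvectorBasis j) : Fin d → ℂ)) := by
    have := congrArg Complex.re h2
    simpa [Complex.re_sum] using this
  have h4 : ∀ k, Complex.normSq (star (⇑(b k)) ⬝ᵥ (⇑(hρ.eigenvectorBasis j) : Fin d → ℂ))
      = Complex.normSq (star (⇑(hρ.eigenvectorBasis j)) ⬝ᵥ (⇑(b k) : Fin d → ℂ)) := by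
    intro k
    rw [dot_conj (⇑(hρ.eigenvectorBasis j)) (⇑(b k)), Complex.normSq_conj]
  rw [← Finset.sum_congr rfl fun k _ => h4 k, ← h3, mul_one]

lemma traceB {ρ : Matrix (Fin d) (Fin d) ℂ} (hρ : ρ.IsHermitian)
    (b : OrthonormalBasis (Fin d) ℂ (EuclideanSpace ℂ (Fin d))) (Z : Matrix (Fin d) (Fin d) ℂ) :
    (Matrix.trace (ρ * (Z + Zᴴ))).re = ∑ j, ∑ k, 2 * hρ.eigenvalues j *
      ((star (⇑(hρ.eigenvectorBasis j)) ⬝ᵥ (⇑(b k) : Fin d → ℂ)) *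
        (star (⇑(b k)) ⬝ᵥ (Z *ᵥ ⇑(hρ.eigenvectorBasis j)))).re := by
  rw [trace_hermitian_mul hρ, Complex.re_sum]
  refine Finset.sum_congr rfl fun j _ => ?_
  set u : Fin d → ℂ := ⇑(hρ.eigenvectorBasis j) with hu
  have hsplit : (Z + Zᴴ) *ᵥ u = Z *ᵥ u + Zᴴ *ᵥ u := Matrix.add_mulVec _ _ _
  rw [hsplit, dotProduct_add]
  have hadj : star u ⬝ᵥ (Zᴴ *ᵥ u) = (starRingEnd ℂ) (star u ⬝ᵥ (Z *ᵥ u)) := by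
    rw [dot_conjTranspose_mulVec, dot_conj]
  rw [hadj]
  have hz : star u ⬝ᵥ (Z *ᵥ u) = ∑ k, (star u ⬝ᵥ (⇑(b k) : Fin d → ℂ)) *
      (star (⇑(b k)) ⬝ᵥ (Z *ᵥ u)) := completeness b u (Z *ᵥ u)
  rw [Complex.re_ofReal_mul, Complex.add_re, Complex.conj_re, hz, Complex.re_sum,
    ← two_mul, Finset.mul_sum, Finset.mul_sum]
  refine Finset.sum_congr rfl fun k _ => by ring

lemma traceC {ρ : Matrix (Fin d) (Fin d) ℂ} (hρ : ρ.IsHermitian)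
    (b : OrthonormalBasis (Fin d) ℂ (EuclideanSpace ℂ (Fin d))) (Z : Matrix (Fin d) (Fin d) ℂ) :
    (Matrix.trace (ρ * (Zᴴ * Z))).re = ∑ j, ∑ k, hρ.eigenvalues j *
      Complex.normSq (star (⇑(b k)) ⬝ᵥ (Z *ᵥ ⇑(hρ.eigenvectorBasis j))) := by
  rw [trace_hermitian_mul hρ, Complex.re_sum]
  refine Finset.sum_congr rfl fun j _ => ?_
  set u : Fin d → ℂ := ⇑(hρ.eigenvectorBasis j) with hu
  have h1 : (Zᴴ * Z) *ᵥ u = Zᴴ *ᵥ (Z *ᵥ u) := (Matrix.mulVec_mulVec u Zᴴ Z).symm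
  rw [h1, dot_conjTranspose_mulVec, dot_self_eq b (Z *ᵥ u), Complex.re_ofReal_mul,
    Complex.re_sum, Finset.mul_sum]
  exact Finset.sum_congr rfl fun k _ => by rw [Complex.ofReal_re]

lemma traceD {σ : Matrix (Fin d) (Fin d) ℂ} (hσ : σ.IsHermitian)
    (b : OrthonormalBasis (Fin d) ℂ (EuclideanSpace ℂ (Fin d))) (Z : Matrix (Fin d) (Fin d) ℂ) :
    (Matrix.trace (σ * (Z * Zᴴ))).re = ∑ j, ∑ k, hσ.eigenvalues k *
      Complex.normSq (star (⇑(hσ.eigenvectorBasis k)) ⬝ᵥ (Z *ᵥ ⇑(b j))) := by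
  rw [Finset.sum_comm, trace_hermitian_mul hσ, Complex.re_sum]
  refine Finset.sum_congr rfl fun k _ => ?_
  set v : Fin d → ℂ := ⇑(hσ.eigenvectorBasis k) with hv
  have h1 : (Z * Zᴴ) *ᵥ v = Z *ᵥ (Zᴴ *ᵥ v) := (Matrix.mulVec_mulVec v Z Zᴴ).symm
  have h2 : star v ⬝ᵥ ((Z * Zᴴ) *ᵥ v) = star (Zᴴ *ᵥ v) ⬝ᵥ (Zᴴ *ᵥ v) := by
    rw [h1]
    have := dot_conjTranspose_mulVec Zᴴ v (Zᴴ *ᵥ v)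
    rw [conjTranspose_conjTranspose] at this
    exact this
  rw [h2, dot_self_eq b (Zᴴ *ᵥ v), Complex.re_ofReal_mul, Complex.re_sum, Finset.mul_sum]
  refine Finset.sum_congr rfl fun j _ => ?_
  rw [Complex.ofReal_re, dot_conjTranspose_mulVec Z (⇑(b j)) v, dot_conj, Complex.normSq_conj]

end QRE

namespace QRE
open Matrix
open scoped ComplexOrder
variable {d : ℕ}

lemma dotProduct_sum' {ι : Type*} (s : Finset ι) (x : Fin d → ℂ) (f : ι → Fin d → ℂ) :
    x ⬝ᵥ (∑ i ∈ s, f i) = ∑ i ∈ s, x ⬝ᵥ f i := by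
  simp only [dotProduct, Finset.sum_apply, Finset.mul_sum]
  exact Finset.sum_comm

lemma dot_hermitian_mulVec {M : Matrix (Fin d) (Fin d) ℂ} (hM : M.IsHermitian)
    (x y : Fin d → ℂ) : star x ⬝ᵥ (M *ᵥ y) = star (M *ᵥ x) ⬝ᵥ y := by
  conv_lhs => rw [← hM]
  rw [dot_conjTranspose_mulVec]

def outer (v u : Fin d → ℂ) : Matrix (Fin d) (Fin d) ℂ :=
  Matrix.of fun i l => v i * (starRingEnd ℂ) (u l)

lemma outer_mulVec (v u x : Fin d → ℂ) : outer v u *ᵥ x = (star u ⬝ᵥ x) • v := by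
  funext i
  simp [outer, mulVec, dotProduct, Finset.mul_sum, mul_comm, mul_left_comm]

lemma sum_mulVec {ι : Type*} (s : Finset ι) (M : ι → Matrix (Fin d) (Fin d) ℂ)
    (x : Fin d → ℂ) : (∑ i ∈ s, M i) *ᵥ x = ∑ i ∈ s, M i *ᵥ x :=
  map_sum (Matrix.mulVec.addMonoidHomLeft x) M s

lemma dot_Zstar (b b' : OrthonormalBasis (Fin d) ℂ (EuclideanSpace ℂ (Fin d)))
    (W : Fin d → Fin d → ℂ) (k' j' : Fin d) :
    star (⇑(b k')) ⬝ᵥ ((∑ j, ∑ k, W k j • outer (⇑(b k)) (⇑(b' j))) *ᵥ ⇑(b' j')) = W k' j' := by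
  rw [sum_mulVec, dotProduct_sum']
  have hterm : ∀ j, star (⇑(b k')) ⬝ᵥ ((∑ k, W k j • outer (⇑(b k)) (⇑(b' j))) *ᵥ ⇑(b' j'))
      = ∑ k, W k j * ((if j = j' then 1 else 0) * (if k' = k then 1 else 0)) := by
    intro j
    rw [sum_mulVec, dotProduct_sum']
    refine Finset.sum_congr rfl fun k _ => ?_
    rw [Matrix.smul_mulVec, outer_mulVec, dotProduct_smul, dotProduct_smul,
      smul_eq_mul, smul_eq_mul, onb_dot b' j j', onb_dot b k' k]
  rw [Finset.sum_congr rfl fun j _ => hterm j]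
  simp [Finset.sum_ite_eq, Finset.sum_ite_eq']

lemma support_overlap {ρ σ : Matrix (Fin d) (Fin d) ℂ} (hρ : ρ.PosSemidef) (hσ : σ.PosSemidef)
    (hsupp : LinearMap.range ρ.mulVecLin ≤ LinearMap.range σ.mulVecLin)
    {j k : Fin d} (hj : 0 < hρ.1.eigenvalues j) (hk : ¬ 0 < hσ.1.eigenvalues k) :
    star (⇑(hρ.1.eigenvectorBasis j)) ⬝ᵥ (⇑(hσ.1.eigenvectorBasis k) : Fin d → ℂ) = 0 := by
  have hμ0 : hσ.1.eigenvalues k = 0 := le_antisymm (not_lt.mp hk) (hσ.eigenvalues_nonneg k)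
  have hmem : (⇑(hρ.1.eigenvectorBasis j) : Fin d → ℂ) ∈ LinearMap.range ρ.mulVecLin := by
    refine ⟨(((hρ.1.eigenvalues j : ℝ) : ℂ))⁻¹ • ⇑(hρ.1.eigenvectorBasis j), ?_⟩
    rw [Matrix.mulVecLin_apply, Matrix.mulVec_smul, hρ.1.mulVec_eigenvectorBasis]
    funext i
    have hne : ((hρ.1.eigenvalues j : ℝ) : ℂ) ≠ 0 := by
      exact_mod_cast Complex.ofReal_ne_zero.mpr (ne_of_gt hj)
    simp only [Pi.smul_apply, smul_eq_mul, Complex.real_smul]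
    field_simp
  obtain ⟨x, hx⟩ := hsupp hmem
  have h1 : star (⇑(hσ.1.eigenvectorBasis k)) ⬝ᵥ (⇑(hρ.1.eigenvectorBasis j) : Fin d → ℂ) = 0 := by
    rw [← hx, Matrix.mulVecLin_apply, dot_hermitian_mulVec hσ.1,
      hσ.1.mulVec_eigenvectorBasis, hμ0]
    simp
  rw [dot_conj, h1, map_zero]

lemma combine (t : ℝ) (f1 f2 f3 f4 : Fin d → Fin d → ℝ) :
    (1/t) * ((∑ j, ∑ k, f1 j k) + (∑ j, ∑ k, f2 j k) + (1-t) * (∑ j, ∑ k, f3 j k)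
      + t * (∑ j, ∑ k, f4 j k))
    = ∑ j, ∑ k, (1/t) * (f1 j k + f2 j k + (1-t) * f3 j k + t * f4 j k) := by
  simp only [Finset.mul_sum, ← Finset.sum_add_distrib]

lemma trace_rankOne_rankOne (a b : EuclideanSpace ℂ (Fin d)) :
    (Matrix.trace (rankOne a * rankOne b)).re =
      Complex.normSq (star (⇑a) ⬝ᵥ (⇑b : Fin d → ℂ)) := by
  rw [trace_rankOne_mul, rankOne_mulVec, dotProduct_smul, smul_eq_mul, dot_conj (⇑b) (⇑a),
    ← Complex.normSq_eq_conj_mul_self, Complex.ofReal_re]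

end QRE


namespace QRE
open Matrix
open scoped ComplexOrder
variable {d : ℕ}

/-- Variational expression for the standard quantum `f_t`-divergence. -/
theorem variational_ft_divergence (ρ σ : Matrix (Fin d) (Fin d) ℂ)
    (hρ : ρ.PosSemidef) (hσ : σ.PosSemidef)
    (hsupp : LinearMap.range ρ.mulVecLin ≤ LinearMap.range σ.mulVecLin)
    (t : ℝ) (ht : t ∈ Set.Ioc (0 : ℝ) 1) :
    Df (ft t) hρ.1 hσ.1 =
      ⨅ Z : Matrix (Fin d) (Fin d) ℂ,
        (1 / t) * ((Matrix.trace ρ).re + (Matrix.trace (ρ * (Z + Zᴴ))).re +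
          (1 - t) * (Matrix.trace (ρ * (Zᴴ * Z))).re +
          t * (Matrix.trace (σ * (Z * Zᴴ))).re) := by
  obtain ⟨ht0, ht1⟩ := ht
  have hηnn : ∀ j, 0 ≤ hρ.1.eigenvalues j := hρ.eigenvalues_nonneg
  have hμnn : ∀ k, 0 ≤ hσ.1.eigenvalues k := hσ.eigenvalues_nonneg
  set F : Matrix (Fin d) (Fin d) ℂ → ℝ := fun Z =>
    (1 / t) * ((Matrix.trace ρ).re + (Matrix.trace (ρ * (Z + Zᴴ))).re +
      (1 - t) * (Matrix.trace (ρ * (Zᴴ * Z))).re +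
      t * (Matrix.trace (σ * (Z * Zᴴ))).re) with hFdef
  -- abbreviations (as plain defs via fun)
  have hFeq : ∀ Z, F Z = ∑ j, ∑ k, (1/t) *
      (hρ.1.eigenvalues j * Complex.normSq
          (star (⇑(hρ.1.eigenvectorBasis j)) ⬝ᵥ (⇑(hσ.1.eigenvectorBasis k) : Fin d → ℂ))
        + 2 * hρ.1.eigenvalues j *
          ((star (⇑(hρ.1.eigenvectorBasis j)) ⬝ᵥ (⇑(hσ.1.eigenvectorBasis k) : Fin d → ℂ)) *
            (star (⇑(hσ.1.eigenvectorBasis k)) ⬝ᵥ (Z *ᵥ ⇑(hρ.1.eigenvectorBasis j)))).re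
        + (1-t) * (hρ.1.eigenvalues j * Complex.normSq
            (star (⇑(hσ.1.eigenvectorBasis k)) ⬝ᵥ (Z *ᵥ ⇑(hρ.1.eigenvectorBasis j))))
        + t * (hσ.1.eigenvalues k * Complex.normSq
            (star (⇑(hσ.1.eigenvectorBasis k)) ⬝ᵥ (Z *ᵥ ⇑(hρ.1.eigenvectorBasis j))))) := by
    intro Z
    rw [hFdef]
    simp only
    rw [traceA hρ.1 hσ.1.eigenvectorBasis, traceB hρ.1 hσ.1.eigenvectorBasis Z,
      traceC hρ.1 hσ.1.eigenvectorBasis Z, traceD hσ.1 hρ.1.eigenvectorBasis Z]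
    exact combine t _ _ _ _
  have hDf : Df (ft t) hρ.1 hσ.1 = ∑ j, ∑ k,
      (if 0 < hρ.1.eigenvalues j ∧ 0 < hσ.1.eigenvalues k then
        hρ.1.eigenvalues j * ft t (hσ.1.eigenvalues k / hρ.1.eigenvalues j) *
          Complex.normSq
            (star (⇑(hρ.1.eigenvectorBasis j)) ⬝ᵥ (⇑(hσ.1.eigenvectorBasis k) : Fin d → ℂ))
      else 0) := by
    unfold Df
    exact Finset.sum_congr rfl fun j _ => Finset.sum_congr rfl fun k _ => by
      rw [trace_rankOne_rankOne]
  have hLB : ∀ Z, Df (ft t) hρ.1 hσ.1 ≤ F Z := by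
    intro Z
    rw [hDf, hFeq Z]
    refine Finset.sum_le_sum fun j _ => Finset.sum_le_sum fun k _ => ?_
    have h := scalar_ineq ht0 ht1 (hηnn j) (hμnn k)
      (star (⇑(hρ.1.eigenvectorBasis j)) ⬝ᵥ (⇑(hσ.1.eigenvectorBasis k) : Fin d → ℂ))
      (star (⇑(hσ.1.eigenvectorBasis k)) ⬝ᵥ (Z *ᵥ ⇑(hρ.1.eigenvectorBasis j)))
      (fun h1 h2 => support_overlap hρ hσ hsupp h1 h2)
    refine h.trans (le_of_eq ?_)
    ring
  set Zstar : Matrix (Fin d) (Fin d) ℂ := ∑ j, ∑ k,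
    wopt t (hρ.1.eigenvalues j) (hσ.1.eigenvalues k)
      (star (⇑(hρ.1.eigenvectorBasis j)) ⬝ᵥ (⇑(hσ.1.eigenvectorBasis k) : Fin d → ℂ)) •
      outer (⇑(hσ.1.eigenvectorBasis k)) (⇑(hρ.1.eigenvectorBasis j)) with hZdef
  have hW : ∀ k j, star (⇑(hσ.1.eigenvectorBasis k)) ⬝ᵥ (Zstar *ᵥ ⇑(hρ.1.eigenvectorBasis j))
      = wopt t (hρ.1.eigenvalues j) (hσ.1.eigenvalues k)
        (star (⇑(hρ.1.eigenvectorBasis j)) ⬝ᵥ (⇑(hσ.1.eigenvectorBasis k) : Fin d → ℂ)) := by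
    intro k j
    rw [hZdef]
    exact dot_Zstar hσ.1.eigenvectorBasis hρ.1.eigenvectorBasis _ k j
  have hUB : F Zstar = Df (ft t) hρ.1 hσ.1 := by
    rw [hDf, hFeq Zstar]
    refine Finset.sum_congr rfl fun j _ => Finset.sum_congr rfl fun k _ => ?_
    rw [hW k j]
    rw [scalar_eq ht0 ht1 (hηnn j) (hμnn k)
      (star (⇑(hρ.1.eigenvectorBasis j)) ⬝ᵥ (⇑(hσ.1.eigenvectorBasis k) : Fin d → ℂ))
      (fun h1 h2 => support_overlap hρ hσ hsupp h1 h2)]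
    ring
  have hbdd : BddBelow (Set.range F) := by
    refine ⟨Df (ft t) hρ.1 hσ.1, ?_⟩
    rintro y ⟨Z, rfl⟩
    exact hLB Z
  exact le_antisymm (le_ciInf hLB) ((ciInf_le hbdd Zstar).trans (le_of_eq hUB))


end QRE
end
end

section
/- Let α ∈ (0,1) ∪ (1,2). For every real x > 0, x^{1−α} − 1 = (sin(απ)/π) · ∫₀¹ ((x−1)/(t(x−1)+1)) · t^{α−1} (1−t)^{1−α} dt, where the integral is a convergent improper integral on (0,1) (the exponents α−1 and 1−α both exceed −1). -/
noncomputable section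

namespace QRE

open scoped ComplexOrder

open Matrix

variable {d : ℕ}

section LoewnerAux

open Set MeasureTheory intervalIntegral Real

lemma beta_integrable {p q : ℝ} (hp : -1 < p) (hq : -1 < q) :
    IntervalIntegrable (fun t : ℝ => t ^ p * (1 - t) ^ q) volume 0 1 := by
  have h1 : IntervalIntegrable (fun t : ℝ => t ^ p * (1 - t) ^ q) volume 0 (1/2) := by
    apply (intervalIntegrable_rpow' hp).mul_continuousOn
    apply ContinuousOn.rpow_const (continuous_const.sub continuous_id).continuousOn
    intro t ht
    rw [uIcc_of_le (by norm_num)] at ht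
    left
    have := ht.2
    intro h
    simp [id] at h; nlinarith
  have h2 : IntervalIntegrable (fun t : ℝ => t ^ p * (1 - t) ^ q) volume (1/2) 1 := by
    have h3 : IntervalIntegrable (fun t : ℝ => (1 - t) ^ q) volume (1/2) 1 := by
      have := (intervalIntegrable_rpow' hq (a := (1:ℝ)/2) (b := 0)).comp_sub_left 1
      norm_num at this
      exact this
    apply h3.continuousOn_mul
    apply ContinuousOn.rpow_const continuous_id.continuousOn
    intro t ht
    rw [uIcc_of_le (by norm_num)] at ht
    left
    have := ht.1
    intro h
    simp [id] at h; nlinarith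
  exact h1.trans h2

lemma sin_pi_alpha_ne {α : ℝ} (hα0 : 0 < α) (hα2 : α < 2) (hα1 : α ≠ 1) :
    Real.sin (π * α) ≠ 0 := by
  intro h
  rw [Real.sin_eq_zero_iff] at h
  obtain ⟨n, hn⟩ := h
  have hπ := Real.pi_pos
  have hna : (n : ℝ) = α := by
    have := mul_left_cancel₀ (ne_of_gt hπ) (by linarith [hn] : π * (n:ℝ) = π * α)
    exact this
  have h0 : (0:ℤ) < n := by exact_mod_cast hna ▸ hα0
  have h2 : n < (2:ℤ) := by exact_mod_cast hna ▸ hα2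
  have : n = 1 := by omega
  exact hα1 (by rw [← hna, this]; norm_num)

lemma beta_value {α : ℝ} (hα0 : 0 < α) (hα2 : α < 2) (hα1 : α ≠ 1) :
    ∫ t in (0:ℝ)..1, t ^ (α-1) * (1-t) ^ (1-α) = (1-α) * (π / Real.sin (π * α)) := by
  have h1 : Complex.Gamma α * Complex.Gamma (2-α)
      = Complex.Gamma 2 * Complex.betaIntegral α (2-α) := by
    have := Complex.Gamma_mul_Gamma_eq_betaIntegral (s := (α:ℂ)) (t := 2-(α:ℂ)) ?_ ?_
    · convert this using 2
      ring
    · simpa using hα0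
    · simp [Complex.sub_re]
      linarith
  have h2 : Complex.betaIntegral α (2-α)
      = ((∫ t in (0:ℝ)..1, t ^ (α-1) * (1-t) ^ (1-α) : ℝ) : ℂ) := by
    rw [← intervalIntegral.integral_ofReal]
    apply intervalIntegral.integral_congr
    intro t ht
    rw [uIcc_of_le (by norm_num)] at ht
    have h0t : (0:ℝ) ≤ t := ht.1
    have ht1 : (0:ℝ) ≤ 1 - t := by linarith [ht.2]
    push_cast
    rw [Complex.ofReal_cpow h0t, Complex.ofReal_cpow ht1]
    push_cast
    ring
  have hg2 : Complex.Gamma 2 = 1 := by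
    have : ((2:ℝ):ℂ) = (2:ℂ) := by norm_num
    rw [← this, Complex.Gamma_ofReal, Real.Gamma_two]
    norm_num
  have h3 : ((Real.Gamma α * Real.Gamma (2-α) : ℝ) : ℂ)
      = ((∫ t in (0:ℝ)..1, t ^ (α-1) * (1-t) ^ (1-α) : ℝ) : ℂ) := by
    rw [← h2]
    push_cast
    rw [← Complex.Gamma_ofReal, ← Complex.Gamma_ofReal]
    push_cast
    rw [h1, hg2, one_mul]
  have h4 : Real.Gamma α * Real.Gamma (2-α)
      = ∫ t in (0:ℝ)..1, t ^ (α-1) * (1-t) ^ (1-α) := by exact_mod_cast h3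
  rw [← h4]
  have h5 : Real.Gamma (2-α) = (1-α) * Real.Gamma (1-α) := by
    have : (2:ℝ) - α = (1-α) + 1 := by ring
    rw [this, Real.Gamma_add_one (by intro h; exact hα1 (by linarith))]
  rw [h5, ← Real.Gamma_mul_Gamma_one_sub α]
  ring

lemma denom_ge {z t : ℝ} (hz : 0 < z) (ht : t ∈ Icc (0:ℝ) 1) : min z 1 ≤ t*(z-1)+1 := by
  rcases le_or_gt z 1 with hz1 | hz1
  · have h1 : (z-1)*1 ≤ (z-1)*t := mul_le_mul_of_nonpos_left ht.2 (by linarith)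
    rw [min_eq_left hz1]; nlinarith [h1]
  · have h1 : 0 ≤ (z-1)*t := mul_nonneg (by linarith) ht.1
    rw [min_eq_right (by linarith)]; nlinarith [h1]

lemma denom_pos {z t : ℝ} (hz : 0 < z) (ht : t ∈ Icc (0:ℝ) 1) : 0 < t*(z-1)+1 :=
  lt_of_lt_of_le (lt_min hz one_pos) (denom_ge hz ht)

lemma w_contOn {α : ℝ} : ContinuousOn (fun t : ℝ => t ^ (α-1) * (1-t) ^ (1-α)) (Ioo (0:ℝ) 1) := by
  apply ContinuousOn.mul
  · exact continuousOn_id.rpow_const (fun t ht => Or.inl (ne_of_gt ht.1))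
  · exact (continuousOn_const.sub continuousOn_id).rpow_const
      (fun t ht => Or.inl (by simp only [Pi.sub_apply, id]; intro h; linarith [ht.2, h]))

lemma E_eval {α x : ℝ} (hα0 : 0 < α) (hα2 : α < 2) (hα1 : α ≠ 1) (hx : 0 < x) :
    ∫ t in (0:ℝ)..1, t ^ (α-1) * (1-t) ^ (1-α) / (t*(x-1)+1)^2
      = x ^ (-α) * ∫ t in (0:ℝ)..1, t ^ (α-1) * (1-t) ^ (1-α) := by
  set g : ℝ → ℝ := fun t => t ^ (α-1) * (1-t) ^ (1-α) / (t*(x-1)+1)^2 with hg_def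
  set f : ℝ → ℝ := fun u => u / (x - (x-1)*u) with hf_def
  set f' : ℝ → ℝ := fun u => x / (x - (x-1)*u)^2 with hf'_def
  have huIcc : Set.uIcc (0:ℝ) 1 = Icc (0:ℝ) 1 := uIcc_of_le (by norm_num)
  have hd : ∀ u : ℝ, u ∈ Icc (0:ℝ) 1 → 0 < x - (x-1)*u := by
    intro u hu
    rcases le_or_gt x 1 with hx1 | hx1
    · have : (x-1)*u ≤ 0 := mul_nonpos_of_nonpos_of_nonneg (by linarith) hu.1
      linarith
    · have : (x-1)*u ≤ (x-1)*1 := mul_le_mul_of_nonneg_left hu.2 (by linarith)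
      linarith
  have hD : ∀ t : ℝ, t ∈ Icc (0:ℝ) 1 → min x 1 ≤ t*(x-1)+1 := by
    intro t ht
    rcases le_or_gt x 1 with hx1 | hx1
    · have h1 : (x-1)*1 ≤ (x-1)*t := mul_le_mul_of_nonpos_left ht.2 (by linarith)
      have : min x 1 = x := min_eq_left hx1
      rw [this]; nlinarith [h1]
    · have h1 : 0 ≤ (x-1)*t := mul_nonneg (by linarith) ht.1
      have : min x 1 = 1 := min_eq_right (by linarith)
      rw [this]; nlinarith [h1]
  have hDpos : ∀ t : ℝ, t ∈ Icc (0:ℝ) 1 → 0 < t*(x-1)+1 := by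
    intro t ht
    have := hD t ht
    have hm : 0 < min x 1 := lt_min hx one_pos
    linarith
  -- key pointwise identity
  have key : ∀ u ∈ Icc (0:ℝ) 1, g (f u) * f' u = x ^ (-α) * (u ^ (α-1) * (1-u) ^ (1-α)) := by
    intro u hu
    rcases eq_or_lt_of_le hu.1 with h0 | h0
    · have hz : (0:ℝ) ^ (α-1) = 0 := Real.zero_rpow (fun h => hα1 (by linarith))
      simp only [hg_def, hf_def, hf'_def, ← h0]
      rw [zero_div, hz]
      ring
    rcases eq_or_lt_of_le hu.2 with h1 | h1
    · have hz : (0:ℝ) ^ (1-α) = 0 := Real.zero_rpow (fun h => hα1 (by linarith))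
      have e : x - (x-1)*1 = 1 := by ring
      simp only [hg_def, hf_def, hf'_def, h1, e, div_one]
      rw [sub_self, hz]
      ring
    · have hdu := hd u hu
      have hdu' : x - (x-1)*u ≠ 0 := ne_of_gt hdu
      simp only [hg_def, hf_def, hf'_def]
      have e1 : (1 : ℝ) - u / (x - (x-1)*u) = (1-u)*x / (x - (x-1)*u) := by
        rw [one_sub_div hdu']; congr 1; ring
      have e2 : u / (x - (x-1)*u) * (x-1) + 1 = x / (x - (x-1)*u) := by
        rw [div_mul_eq_mul_div, div_add_one hdu']; congr 1; ring
      rw [e1, e2]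
      rw [Real.div_rpow h0.le hdu.le, Real.div_rpow (by nlinarith : (0:ℝ) ≤ (1-u)*x) hdu.le,
        Real.mul_rpow (by linarith : (0:ℝ) ≤ 1-u) hx.le, div_pow]
      have hxne : x ≠ 0 := ne_of_gt hx
      have hPQ : (x - (x-1)*u) ^ (α-1) * (x - (x-1)*u) ^ (1-α) = 1 := by
        rw [← Real.rpow_add hdu]; norm_num
      have hxa : x ^ (-α) * x ^ 2 = x ^ (1-α) * x := by
        rw [← Real.rpow_natCast x 2, ← Real.rpow_add hx]
        nth_rewrite 3 [← Real.rpow_one x]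
        rw [← Real.rpow_add hx]
        ring_nf
      have hP : (x - (x-1)*u) ^ (α-1) ≠ 0 := by positivity
      have hQ : (x - (x-1)*u) ^ (1-α) ≠ 0 := by positivity
      field_simp
      rw [mul_assoc x, hPQ, mul_one, Real.rpow_sub hx, Real.rpow_one, Real.rpow_neg hx.le, div_eq_mul_inv]
  -- hypotheses of the substitution theorem
  have hf_cont : ContinuousOn f (Set.uIcc (0:ℝ) 1) := by
    rw [huIcc]
    exact continuousOn_id.div
      ((continuousOn_const.sub (continuousOn_const.mul continuousOn_id)))
      (fun u hu => ne_of_gt (hd u hu))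
  have hff' : ∀ u ∈ Ioo (min (0:ℝ) 1) (max (0:ℝ) 1), HasDerivWithinAt f (f' u) (Ioi u) u := by
    intro u hu
    rw [min_eq_left (by norm_num), max_eq_right (by norm_num : (0:ℝ) ≤ 1)] at hu
    have hu' : u ∈ Icc (0:ℝ) 1 := Ioo_subset_Icc_self hu
    have hden : HasDerivAt (fun u : ℝ => x - (x-1)*u) (-(x-1)) u := by
      simpa using ((hasDerivAt_id u).const_mul (x-1)).const_sub x
    have H := (hasDerivAt_id u).div hden (ne_of_gt (hd u hu'))
    simp only [id_eq] at H
    have : (1 * (x - (x-1)*u) - u * -(x-1)) / (x - (x-1)*u)^2 = f' u := by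
      rw [hf'_def]; congr 1; ring
    rw [this] at H
    exact H.hasDerivWithinAt
  have himS : f '' Ioo (0:ℝ) 1 ⊆ Ioo (0:ℝ) 1 := by
    rintro _ ⟨u, hu, rfl⟩
    have hu' : u ∈ Icc (0:ℝ) 1 := Ioo_subset_Icc_self hu
    constructor
    · exact div_pos hu.1 (hd u hu')
    · rw [div_lt_one (hd u hu')]
      nlinarith [mul_pos hx (by linarith [hu.2] : (0:ℝ) < 1-u)]
  have hgc : ContinuousOn g (Ioo (0:ℝ) 1) := by
    apply ContinuousOn.div
    · apply ContinuousOn.mul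
      · exact continuousOn_id.rpow_const (fun t ht => Or.inl (ne_of_gt ht.1))
      · exact (continuousOn_const.sub continuousOn_id).rpow_const
          (fun t ht => Or.inl (by simp only [Pi.sub_apply, id]; intro h; linarith [ht.2, h]))
    · exact ((continuousOn_id.mul continuousOn_const).add continuousOn_const).pow 2
    · intro t ht
      exact pow_ne_zero 2 (ne_of_gt (hDpos t (Ioo_subset_Icc_self ht)))
  have hg_cont : ContinuousOn g (f '' Ioo (min (0:ℝ) 1) (max (0:ℝ) 1)) := by
    rw [min_eq_left (by norm_num), max_eq_right (by norm_num : (0:ℝ) ≤ 1)]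
    exact hgc.mono himS
  have hmin : 0 < min x 1 := lt_min hx one_pos
  have hwInt : IntegrableOn (fun t : ℝ => t ^ (α-1) * (1-t) ^ (1-α)) (Icc (0:ℝ) 1) volume := by
    rw [integrableOn_Icc_iff_integrableOn_Ioc]
    have := beta_integrable (by linarith : (-1:ℝ) < α-1) (by linarith : (-1:ℝ) < 1-α)
    rw [intervalIntegrable_iff, uIoc_of_le (by norm_num : (0:ℝ) ≤ 1)] at this
    exact this
  have hgmeas : AEStronglyMeasurable g (volume.restrict (Icc (0:ℝ) 1)) := by
    rw [← MeasureTheory.Measure.restrict_congr_set Ioo_ae_eq_Icc]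
    exact hgc.aestronglyMeasurable measurableSet_Ioo
  have hg1 : IntegrableOn g (f '' Set.uIcc (0:ℝ) 1) := by
    have himS2 : f '' Set.uIcc (0:ℝ) 1 ⊆ Icc (0:ℝ) 1 := by
      rw [huIcc]
      rintro _ ⟨u, hu, rfl⟩
      constructor
      · exact div_nonneg hu.1 (hd u hu).le
      · rw [div_le_one (hd u hu)]
        nlinarith [mul_nonneg hx.le (by linarith [hu.2] : (0:ℝ) ≤ 1-u)]
    refine IntegrableOn.mono_set ?_ himS2
    refine Integrable.mono ((hwInt.div_const ((min x 1)^2))) hgmeas ?_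
    rw [ae_restrict_iff' measurableSet_Icc]
    filter_upwards with t ht
    have h1 : (0:ℝ) ≤ t ^ (α-1) * (1-t) ^ (1-α) :=
      mul_nonneg (Real.rpow_nonneg ht.1 _) (Real.rpow_nonneg (by linarith [ht.2]) _)
    have h2 := hD t ht
    have h3 := hDpos t ht
    rw [Real.norm_eq_abs, Real.norm_eq_abs, hg_def,
      abs_of_nonneg (div_nonneg h1 (by positivity)),
      abs_of_nonneg (div_nonneg h1 (by positivity))]
    gcongr
  have hg2 : IntegrableOn (fun u => (g ∘ f) u * f' u) (Set.uIcc (0:ℝ) 1) := by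
    rw [huIcc]
    have hInt2 : IntegrableOn
        (fun u : ℝ => x ^ (-α) * (u ^ (α-1) * (1-u) ^ (1-α))) (Icc (0:ℝ) 1) volume :=
      hwInt.const_mul _
    exact hInt2.congr_fun (fun u hu => (key u hu).symm) measurableSet_Icc
  have hsub := intervalIntegral.integral_comp_mul_deriv''' hf_cont hff' hg_cont hg1 hg2
  have hf0 : f 0 = 0 := by simp [hf_def]
  have hf1 : f 1 = 1 := by
    rw [hf_def]
    have : x - (x-1)*1 = 1 := by ring
    simp only [this]
    norm_num
  rw [hf0, hf1] at hsub
  calc ∫ t in (0:ℝ)..1, g t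
      = ∫ u in (0:ℝ)..1, (g ∘ f) u * f' u := hsub.symm
    _ = ∫ u in (0:ℝ)..1, x ^ (-α) * (u ^ (α-1) * (1-u) ^ (1-α)) := by
        apply intervalIntegral.integral_congr
        intro u hu
        rw [huIcc] at hu
        exact key u hu
    _ = x ^ (-α) * ∫ u in (0:ℝ)..1, u ^ (α-1) * (1-u) ^ (1-α) :=
        intervalIntegral.integral_const_mul _ _

lemma hasDeriv_F {α : ℝ} (hα0 : 0 < α) (hα2 : α < 2) {y : ℝ} (hy : 0 < y) :
    HasDerivAt (fun z => ∫ t in (0:ℝ)..1, ft t z * (t ^ (α-1) * (1-t) ^ (1-α)))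
      (∫ t in (0:ℝ)..1, t ^ (α-1) * (1-t) ^ (1-α) / (t*(y-1)+1)^2) y := by
  set w : ℝ → ℝ := fun t => t ^ (α-1) * (1-t) ^ (1-α) with hw_def
  have hε : (0:ℝ) < y/2 := by linarith
  have hm : (0:ℝ) < min (y/2) 1 := lt_min hε one_pos
  have hball : ∀ z ∈ Metric.ball y (y/2), 0 < z := by
    intro z hz
    rw [Metric.mem_ball, Real.dist_eq, abs_lt] at hz
    linarith [hz.1]
  have hDb : ∀ z ∈ Metric.ball y (y/2), ∀ t ∈ Icc (0:ℝ) 1, min (y/2) 1 ≤ t*(z-1)+1 := by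
    intro z hz t ht
    refine le_trans ?_ (denom_ge (hball z hz) ht)
    rw [Metric.mem_ball, Real.dist_eq, abs_lt] at hz
    exact min_le_min (by linarith [hz.1]) le_rfl
  have hwnn : ∀ t ∈ Icc (0:ℝ) 1, 0 ≤ w t := by
    intro t ht
    exact mul_nonneg (Real.rpow_nonneg ht.1 _) (Real.rpow_nonneg (by linarith [ht.2]) _)
  have h := intervalIntegral.hasDerivAt_integral_of_dominated_loc_of_deriv_le
    (F := fun z t => ft t z * w t)
    (F' := fun z t => w t / (t*(z-1)+1)^2)
    (x₀ := y) (a := 0) (b := 1) (μ := volume)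
    (bound := fun t => w t / (min (y/2) 1)^2)
    (Metric.ball_mem_nhds y hε) ?_ ?_ ?_ ?_ ?_ ?_
  · exact h.2
  · -- measurability of F z, eventually
    filter_upwards [Metric.ball_mem_nhds y hε] with z hz
    rw [uIoc_of_le (by norm_num : (0:ℝ) ≤ 1),
      ← MeasureTheory.Measure.restrict_congr_set Ioo_ae_eq_Ioc]
    apply ContinuousOn.aestronglyMeasurable _ measurableSet_Ioo
    apply ContinuousOn.mul _ w_contOn
    apply continuousOn_const.div
      ((continuousOn_id.mul continuousOn_const).add continuousOn_const)
    intro t ht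
    exact ne_of_gt (denom_pos (hball z hz) (Ioo_subset_Icc_self ht))
  · -- integrability of F y
    apply (beta_integrable (by linarith : (-1:ℝ) < α-1)
      (by linarith : (-1:ℝ) < 1-α)).continuousOn_mul
    rw [uIcc_of_le (by norm_num : (0:ℝ) ≤ 1)]
    apply continuousOn_const.div
      ((continuousOn_id.mul continuousOn_const).add continuousOn_const)
    intro t ht
    exact ne_of_gt (denom_pos hy ht)
  · -- measurability of F' y
    show AEStronglyMeasurable (fun t => w t / (t*(y-1)+1)^2) _
    rw [uIoc_of_le (by norm_num : (0:ℝ) ≤ 1),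
      ← MeasureTheory.Measure.restrict_congr_set Ioo_ae_eq_Ioc]
    apply ContinuousOn.aestronglyMeasurable _ measurableSet_Ioo
    apply ContinuousOn.div w_contOn
      (((continuousOn_id.mul continuousOn_const).add continuousOn_const).pow 2)
    intro t ht
    exact pow_ne_zero 2 (ne_of_gt (denom_pos hy (Ioo_subset_Icc_self ht)))
  · -- bound
    filter_upwards with t ht z hz
    have ht' : t ∈ Icc (0:ℝ) 1 := by
      rw [uIoc_of_le (by norm_num : (0:ℝ) ≤ 1)] at ht
      exact Ioc_subset_Icc_self ht
    have h1 := hwnn t ht'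
    have h2 := hDb z hz t ht'
    rw [Real.norm_eq_abs, abs_of_nonneg (div_nonneg h1 (by positivity))]
    gcongr
  · -- integrability of bound
    exact (beta_integrable (by linarith) (by linarith)).div_const _
  · -- differentiability
    filter_upwards with t ht z hz
    have ht' : t ∈ Icc (0:ℝ) 1 := by
      rw [uIoc_of_le (by norm_num : (0:ℝ) ≤ 1)] at ht
      exact Ioc_subset_Icc_self ht
    have hDz : 0 < t*(z-1)+1 := denom_pos (hball z hz) ht'
    have h1 : HasDerivAt (fun z : ℝ => z - 1) 1 z := (hasDerivAt_id z).sub_const 1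
    have h2 : HasDerivAt (fun z : ℝ => t*(z-1)+1) t z := by
      simpa using (((hasDerivAt_id z).sub_const 1).const_mul t).add_const 1
    have H := (h1.div h2 (ne_of_gt hDz)).mul_const (w t)
    have e : (1 * (t*(z-1)+1) - (z-1)*t) / (t*(z-1)+1)^2 * w t
        = w t / (t*(z-1)+1)^2 := by
      have e1 : 1 * (t*(z-1)+1) - (z-1)*t = 1 := by ring
      rw [e1]
      ring
    rw [e] at H
    exact H


/-- Löwner's integral representation of the power function: for `α ∈ (0,1) ∪ (1,2)`
and `x > 0`,
`x^{1−α} − 1 = (sin(απ)/π) ∫₀¹ f_t(x) t^{α−1} (1−t)^{1−α} dt`. -/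
theorem rpow_sub_one_eq_integral (α : ℝ)
    (hα : α ∈ Set.Ioo (0 : ℝ) 1 ∪ Set.Ioo (1 : ℝ) 2) (x : ℝ) (hx : 0 < x) :
    x ^ (1 - α) - 1 =
      (Real.sin (α * Real.pi) / Real.pi) *
        ∫ t in (0 : ℝ)..1, ft t x * t ^ (α - 1) * (1 - t) ^ (1 - α) := by
  obtain ⟨hα0, hα2, hα1⟩ : 0 < α ∧ α < 2 ∧ α ≠ 1 := by
    rcases hα with h | h
    · exact ⟨h.1, by linarith [h.2], ne_of_lt h.2⟩
    · exact ⟨by linarith [h.1], h.2, ne_of_gt h.1⟩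
  have hsin : Real.sin (π * α) ≠ 0 := sin_pi_alpha_ne hα0 hα2 hα1
  have hπ : (π : ℝ) ≠ 0 := ne_of_gt pi_pos
  have hpos : ∀ y ∈ Set.uIcc (1:ℝ) x, 0 < y := by
    intro y hy
    exact lt_of_lt_of_le (lt_min one_pos hx) hy.1
  have hd1 : ∀ y ∈ Set.uIcc (1:ℝ) x,
      HasDerivAt (fun z : ℝ => z ^ (1-α) - 1) ((1-α) * y ^ (-α)) y := by
    intro y hy
    have h := (Real.hasDerivAt_rpow_const (p := 1-α)
      (Or.inl (ne_of_gt (hpos y hy)))).sub_const 1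
    rw [show (1-α) - 1 = -α by ring] at h
    exact h
  have hd2 : ∀ y ∈ Set.uIcc (1:ℝ) x,
      HasDerivAt (fun z : ℝ => (Real.sin (α * π) / π) *
          ∫ t in (0:ℝ)..1, ft t z * (t ^ (α-1) * (1-t) ^ (1-α)))
        ((1-α) * y ^ (-α)) y := by
    intro y hy
    have h := (hasDeriv_F hα0 hα2 (hpos y hy)).const_mul (Real.sin (α * π) / π)
    rw [E_eval hα0 hα2 hα1 (hpos y hy), beta_value hα0 hα2 hα1] at h
    refine h.congr_deriv ?_
    rw [mul_comm α π]
    field_simp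
  have hDint : IntervalIntegrable (fun y : ℝ => (1-α) * y ^ (-α)) volume 1 x := by
    apply ContinuousOn.intervalIntegrable
    exact continuousOn_const.mul
      (continuousOn_id.rpow_const (fun y hy => Or.inl (ne_of_gt (hpos y hy))))
  have k1 := intervalIntegral.integral_eq_sub_of_hasDerivAt hd1 hDint
  have k2 := intervalIntegral.integral_eq_sub_of_hasDerivAt hd2 hDint
  have hR1 : (Real.sin (α * π) / π) *
      ∫ t in (0:ℝ)..1, ft t 1 * (t ^ (α-1) * (1-t) ^ (1-α)) = 0 := by
    simp [ft]
  rw [hR1] at k2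
  rw [Real.one_rpow] at k1
  have hfin := k1.symm.trans k2
  simp_rw [mul_assoc]
  linarith [hfin]

end LoewnerAux

end QRE
end
end

section
/- Let ρ and σ be positive semidefinite Hermitian matrices on ℂ^d, t ∈ [0,1], and define g(Z) := tr[ρ] + tr[ρ(Z+Z†)] + (1−t)·tr[ρ Z†Z] + t·tr[σ Z Z†] for d×d complex matrices Z. If a d×d complex matrix Z̃ satisfies the Sylvester equation (1−t)·Z̃ρ + t·σZ̃ = −ρ (equivalently, (1−t)·ρZ̃† + t·Z̃†σ = −ρ), then Z̃ is a global minimizer: g(Z̃) ≤ g(Z) for every d×d complex matrix Z, i.e. g(Z̃) = inf_Z g(Z). -/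
noncomputable section

namespace QRE

open scoped ComplexOrder

open Matrix

variable {d : ℕ}

/-- The loss `g(Z) = tr ρ + tr[ρ(Z+Z†)] + (1−t) tr[ρZ†Z] + t tr[σZZ†]`. -/
def loss (t : ℝ) (ρ σ Z : Matrix (Fin d) (Fin d) ℂ) : ℝ :=
  (Matrix.trace ρ).re + (Matrix.trace (ρ * (Z + Zᴴ))).re +
    (1 - t) * (Matrix.trace (ρ * (Zᴴ * Z))).re +
    t * (Matrix.trace (σ * (Z * Zᴴ))).re

private lemma trace_re_nonneg {M : Matrix (Fin d) (Fin d) ℂ} (hM : M.PosSemidef) :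
    0 ≤ (Matrix.trace M).re := by
  rw [Matrix.trace, Complex.re_sum]
  refine Finset.sum_nonneg fun i _ => ?_
  have h : (0:ℂ) ≤ M i i := by
    exact hM.diag_nonneg
  exact (Complex.le_def.mp h).1

/-- Any solution of the Sylvester equation `(1−t) Z̃ρ + t σZ̃ = −ρ` is a global
minimizer of the loss. -/
theorem sylvester_solution_is_minimizer (ρ σ : Matrix (Fin d) (Fin d) ℂ)
    (hρ : ρ.PosSemidef) (hσ : σ.PosSemidef) (t : ℝ) (ht : t ∈ Set.Icc (0 : ℝ) 1)
    (Ztil : Matrix (Fin d) (Fin d) ℂ)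
    (hZ : ((1 - t : ℝ) : ℂ) • (Ztil * ρ) + ((t : ℝ) : ℂ) • (σ * Ztil) = -ρ) :
    (∀ Z : Matrix (Fin d) (Fin d) ℂ, loss t ρ σ Ztil ≤ loss t ρ σ Z) ∧
      loss t ρ σ Ztil = ⨅ Z : Matrix (Fin d) (Fin d) ℂ, loss t ρ σ Z := by
  obtain ⟨ht0, ht1⟩ := ht
  have hZ' : ((1 - t : ℝ) : ℂ) • (ρ * Ztilᴴ) + ((t : ℝ) : ℂ) • (Ztilᴴ * σ) = -ρ := by
    have h := congrArg conjTranspose hZ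
    simpa [conjTranspose_smul, conjTranspose_mul, hρ.1.eq, hσ.1.eq] using h
  have hmin : ∀ Z : Matrix (Fin d) (Fin d) ℂ, loss t ρ σ Ztil ≤ loss t ρ σ Z := by
    intro Z
    set W : Matrix (Fin d) (Fin d) ℂ := Z - Ztil with hWdef
    have hZeq : Z = Ztil + W := by rw [hWdef]; abel
    -- h1 : cross terms in W vanish
    have h1 : Matrix.trace (ρ * W) + ((1 - t : ℝ) : ℂ) * Matrix.trace (ρ * (Ztilᴴ * W))
        + ((t : ℝ) : ℂ) * Matrix.trace (σ * (W * Ztilᴴ)) = 0 := by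
      have h := congrArg (fun M => Matrix.trace (M * W)) hZ'
      simp only [add_mul, smul_mul_assoc, trace_add, trace_smul, neg_mul, trace_neg,
        smul_eq_mul] at h
      have e1 : Matrix.trace (ρ * Ztilᴴ * W) = Matrix.trace (ρ * (Ztilᴴ * W)) := by
        rw [mul_assoc]
      have e2 : Matrix.trace (Ztilᴴ * σ * W) = Matrix.trace (σ * (W * Ztilᴴ)) := by
        rw [mul_assoc, trace_mul_comm, mul_assoc]
      rw [e1, e2] at h
      linear_combination h
    have h2 : Matrix.trace (ρ * Wᴴ) + ((1 - t : ℝ) : ℂ) * Matrix.trace (ρ * (Wᴴ * Ztil))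
        + ((t : ℝ) : ℂ) * Matrix.trace (σ * (Ztil * Wᴴ)) = 0 := by
      have h := congrArg (fun M => Matrix.trace (M * Wᴴ)) hZ
      simp only [add_mul, smul_mul_assoc, trace_add, trace_smul, neg_mul, trace_neg,
        smul_eq_mul] at h
      have e1 : Matrix.trace (Ztil * ρ * Wᴴ) = Matrix.trace (ρ * (Wᴴ * Ztil)) := by
        rw [mul_assoc, trace_mul_comm, mul_assoc]
      have e2 : Matrix.trace (σ * Ztil * Wᴴ) = Matrix.trace (σ * (Ztil * Wᴴ)) := by
        rw [mul_assoc]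
      rw [e1, e2] at h
      linear_combination h
    -- complex identity
    have hc : Matrix.trace (ρ * (Z + Zᴴ)) + ((1 - t : ℝ) : ℂ) * Matrix.trace (ρ * (Zᴴ * Z))
        + ((t : ℝ) : ℂ) * Matrix.trace (σ * (Z * Zᴴ))
        = Matrix.trace (ρ * (Ztil + Ztilᴴ))
          + ((1 - t : ℝ) : ℂ) * Matrix.trace (ρ * (Ztilᴴ * Ztil))
          + ((t : ℝ) : ℂ) * Matrix.trace (σ * (Ztil * Ztilᴴ))
          + ((1 - t : ℝ) : ℂ) * Matrix.trace (ρ * (Wᴴ * W))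
          + ((t : ℝ) : ℂ) * Matrix.trace (σ * (W * Wᴴ)) := by
      rw [hZeq]
      simp only [conjTranspose_add, mul_add, add_mul, trace_add]
      linear_combination h1 + h2
    have hre := congrArg Complex.re hc
    simp only [Complex.add_re, Complex.re_ofReal_mul] at hre
    have h3 : Matrix.trace (ρ * (Wᴴ * W)) = Matrix.trace (W * ρ * Wᴴ) := by
      rw [trace_mul_comm, mul_assoc, trace_mul_comm]
    have h4 : Matrix.trace (σ * (W * Wᴴ)) = Matrix.trace (Wᴴ * σ * W) := by
      rw [trace_mul_comm, mul_assoc, trace_mul_comm]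
    have hn1 : 0 ≤ (Matrix.trace (ρ * (Wᴴ * W))).re := by
      rw [h3]; exact trace_re_nonneg (hρ.mul_mul_conjTranspose_same W)
    have hn2 : 0 ≤ (Matrix.trace (σ * (W * Wᴴ))).re := by
      rw [h4]; exact trace_re_nonneg (hσ.conjTranspose_mul_mul_same W)
    simp only [loss]
    nlinarith [mul_nonneg (by linarith : (0:ℝ) ≤ 1 - t) hn1, mul_nonneg ht0 hn2, hre]
  refine ⟨hmin, le_antisymm (le_ciInf hmin) (ciInf_le ⟨loss t ρ σ Ztil, ?_⟩ Ztil)⟩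
  rintro x ⟨Z, rfl⟩
  exact hmin Z


end QRE
end
end

section
/- Let ρ and σ be positive semidefinite Hermitian matrices on ℂ^d with supp(ρ) ⊆ supp(σ), and let t ∈ (0,1]. Then the Sylvester equation (1−t)·Zρ + t·σZ = −ρ in the unknown d×d complex matrix Z admits at least one solution, and the solution is unique if and only if at least one of ρ and σ is full-rank (invertible). -/
noncomputable section

namespace QRE

open scoped ComplexOrder

open Matrix

variable {d : ℕ}

/-! ### Auxiliary lemmas for the Sylvester equation -/

private lemma psd_diag_nonneg {n : ℕ} {M : Matrix (Fin n) (Fin n) ℂ} (hM : M.PosSemidef)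
    (i : Fin n) : 0 ≤ M i i := by
  exact hM.diag_nonneg

private lemma psd_trace_nonneg {n : ℕ} {M : Matrix (Fin n) (Fin n) ℂ} (hM : M.PosSemidef) :
    0 ≤ M.trace :=
  Finset.sum_nonneg fun i _ => psd_diag_nonneg hM i

private lemma aux_diag_eq {n : ℕ} (M A : Matrix (Fin n) (Fin n) ℂ) (j : Fin n) :
    (Aᴴ * M * A) j j = dotProduct (star fun i => A i j) (M *ᵥ fun i => A i j) := by
  simp only [Matrix.mul_apply, Matrix.conjTranspose_apply, dotProduct, Matrix.mulVec,
    Pi.star_apply, Finset.sum_mul, Finset.mul_sum]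
  rw [Finset.sum_comm]
  exact Finset.sum_congr rfl fun l _ => Finset.sum_congr rfl fun k _ => by ring

/-- Kernel of the homogeneous Sylvester operator: `σ W = 0`. -/
private lemma sylvester_ker {d : ℕ} {ρ σ : Matrix (Fin d) (Fin d) ℂ}
    (hρ : ρ.PosSemidef) (hσ : σ.PosSemidef) {t : ℝ} (ht : t ∈ Set.Ioc (0 : ℝ) 1)
    {W : Matrix (Fin d) (Fin d) ℂ}
    (hW : ((1 - t : ℝ) : ℂ) • (W * ρ) + ((t : ℝ) : ℂ) • (σ * W) = 0) :
    σ * W = 0 := by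
  set c1 : ℂ := ((1 - t : ℝ) : ℂ) with hc1
  set c2 : ℂ := ((t : ℝ) : ℂ) with hc2
  set a : ℂ := (Wᴴ * (W * ρ)).trace with haa
  set b : ℂ := (Wᴴ * (σ * W)).trace with hbb
  have h0 : c1 * a + c2 * b = 0 := by
    have h := congrArg (fun M => (Wᴴ * M).trace) hW
    simpa [Matrix.mul_add, Matrix.mul_smul, Matrix.trace_add, Matrix.trace_smul,
      smul_eq_mul, haa, hbb] using h
  have ha : 0 ≤ a := by
    rw [haa, Matrix.trace_mul_comm]
    exact psd_trace_nonneg (hρ.mul_mul_conjTranspose_same W)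
  have hbpsd : (Wᴴ * σ * W).PosSemidef := hσ.conjTranspose_mul_mul_same W
  have hb : 0 ≤ b := by
    rw [hbb, ← mul_assoc]
    exact psd_trace_nonneg hbpsd
  have hc1n : 0 ≤ c1 := by
    rw [hc1, Complex.zero_le_real]; linarith [ht.2]
  have hc2p : (0 : ℂ) < c2 := by
    rw [hc2, Complex.zero_lt_real]; exact ht.1
  have hb0 : b = 0 := by
    have h1 : 0 ≤ c1 * a := mul_nonneg hc1n ha
    have h2 : 0 ≤ c2 * b := mul_nonneg hc2p.le hb
    have h3 : c2 * b = 0 := by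
      refine le_antisymm ?_ h2
      rw [eq_neg_of_add_eq_zero_right h0]
      exact neg_nonpos.2 h1
    rcases mul_eq_zero.1 h3 with h | h
    · exact absurd h hc2p.ne'
    · exact h
  have hdiag : ∀ j, (Wᴴ * σ * W) j j = 0 := by
    have hsum : ∑ j, (Wᴴ * σ * W) j j = 0 := by
      have : (Wᴴ * σ * W).trace = 0 := by rw [mul_assoc]; exact hb0
      simpa [Matrix.trace, Matrix.diag] using this
    intro j
    exact (Finset.sum_eq_zero_iff_of_nonneg fun i _ => psd_diag_nonneg hbpsd i).1 hsum j
      (Finset.mem_univ j)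
  have hcol : ∀ j, σ *ᵥ (fun i => W i j) = 0 := by
    intro j
    refine (hσ.dotProduct_mulVec_zero_iff _).1 ?_
    rw [← aux_diag_eq σ W j]
    exact hdiag j
  ext i j
  have := congrFun (hcol j) i
  simpa [Matrix.mul_apply, Matrix.mulVec, dotProduct] using this

/-- `ker σ ⊆ ker ρ` when `range ρ ≤ range σ` (both PSD). -/
private lemma ker_sigma_le_ker_rho {d : ℕ} {ρ σ : Matrix (Fin d) (Fin d) ℂ}
    (hρ : ρ.PosSemidef) (hσ : σ.PosSemidef)
    (hsupp : LinearMap.range ρ.mulVecLin ≤ LinearMap.range σ.mulVecLin)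
    {v : Fin d → ℂ} (hv : σ *ᵥ v = 0) : ρ *ᵥ v = 0 := by
  have hvσ : star v ᵥ* σ = 0 := by
    calc star v ᵥ* σ = star v ᵥ* σᴴ := by rw [hσ.1]
      _ = star (σ *ᵥ v) := (Matrix.star_mulVec _ _).symm
      _ = 0 := by rw [hv]; simp
  obtain ⟨y, hy⟩ := hsupp (LinearMap.mem_range.2 ⟨v, rfl⟩)
  refine (hρ.dotProduct_mulVec_zero_iff v).1 ?_
  have hy' : σ *ᵥ y = ρ *ᵥ v := by simpa [Matrix.mulVecLin_apply] using hy
  rw [← hy', Matrix.dotProduct_mulVec, hvσ, zero_dotProduct]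

/-- `range σ ∩ ker σ = 0` for PSD `σ`. -/
private lemma range_inter_ker {d : ℕ} {σ : Matrix (Fin d) (Fin d) ℂ} (hσ : σ.PosSemidef)
    {x : Fin d → ℂ} (hx : x ∈ LinearMap.range σ.mulVecLin) (hx0 : σ *ᵥ x = 0) : x = 0 := by
  obtain ⟨y, hy⟩ := hx
  have hy' : σ *ᵥ y = x := by simpa [Matrix.mulVecLin_apply] using hy
  have hxσ : star x ᵥ* σ = 0 := by
    calc star x ᵥ* σ = star x ᵥ* σᴴ := by rw [hσ.1]
      _ = star (σ *ᵥ x) := (Matrix.star_mulVec _ _).symm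
      _ = 0 := by rw [hx0]; simp
  have h2 : dotProduct (star x) x = dotProduct (star x) (σ *ᵥ y) := by rw [hy']
  rw [Matrix.dotProduct_mulVec, hxσ, zero_dotProduct] at h2
  exact dotProduct_star_self_eq_zero.1 h2

private lemma sylvester_exists {d : ℕ} (ρ σ : Matrix (Fin d) (Fin d) ℂ)
    (hρ : ρ.PosSemidef) (hσ : σ.PosSemidef)
    (hsupp : LinearMap.range ρ.mulVecLin ≤ LinearMap.range σ.mulVecLin)
    (t : ℝ) (ht : t ∈ Set.Ioc (0 : ℝ) 1) :
    ∃ Z : Matrix (Fin d) (Fin d) ℂ,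
      ((1 - t : ℝ) : ℂ) • (Z * ρ) + ((t : ℝ) : ℂ) • (σ * Z) = -ρ := by
  set c1 : ℂ := ((1 - t : ℝ) : ℂ) with hc1
  set c2 : ℂ := ((t : ℝ) : ℂ) with hc2
  let S : Submodule ℂ (Matrix (Fin d) (Fin d) ℂ) :=
    { carrier := {Z | ∀ v, Z *ᵥ v ∈ LinearMap.range σ.mulVecLin}
      add_mem' := fun ha hb v => by
        rw [Matrix.add_mulVec]; exact add_mem (ha v) (hb v)
      zero_mem' := fun v => by rw [Matrix.zero_mulVec]; exact zero_mem _
      smul_mem' := fun c Z hZ v => by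
        rw [Matrix.smul_mulVec]; exact Submodule.smul_mem _ c (hZ v) }
  let T : Matrix (Fin d) (Fin d) ℂ →ₗ[ℂ] Matrix (Fin d) (Fin d) ℂ :=
    { toFun := fun Z => c1 • (Z * ρ) + c2 • (σ * Z)
      map_add' := fun A B => by
        rw [Matrix.add_mul, Matrix.mul_add, smul_add, smul_add]; abel
      map_smul' := fun m Z => by
        simp only [Matrix.smul_mul, Matrix.mul_smul, RingHom.id_apply, smul_add,
          smul_comm m c1, smul_comm m c2] }
  have hTS : ∀ Z ∈ S, T Z ∈ S := by
    intro Z hZ v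
    show (c1 • (Z * ρ) + c2 • (σ * Z)) *ᵥ v ∈ _
    rw [Matrix.add_mulVec, Matrix.smul_mulVec, Matrix.smul_mulVec,
      ← Matrix.mulVec_mulVec, ← Matrix.mulVec_mulVec]
    exact add_mem (Submodule.smul_mem _ _ (hZ _))
      (Submodule.smul_mem _ _ (LinearMap.mem_range.2 ⟨Z *ᵥ v, rfl⟩))
  have hinj : Function.Injective (T.restrict hTS) := by
    rw [← LinearMap.ker_eq_bot, LinearMap.ker_eq_bot']
    intro W hW
    have hW0 : c1 • (W.1 * ρ) + c2 • (σ * W.1) = 0 := congrArg Subtype.val hW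
    have hσW : σ * W.1 = 0 := sylvester_ker hρ hσ ht hW0
    have hcols : ∀ v, W.1 *ᵥ v = 0 := by
      intro v
      refine range_inter_ker hσ (W.2 v) ?_
      rw [Matrix.mulVec_mulVec, hσW, Matrix.zero_mulVec]
    have : W.1 = 0 := by
      ext i j
      have h := congrFun (hcols (Pi.single j 1)) i
      simpa [Matrix.mulVec_single] using h
    exact Subtype.ext this
  have hsurj : Function.Surjective (T.restrict hTS) :=
    LinearMap.injective_iff_surjective.1 hinj
  have hρS : -ρ ∈ S := by
    intro v
    rw [Matrix.neg_mulVec]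
    exact neg_mem (hsupp (LinearMap.mem_range.2 ⟨v, rfl⟩))
  obtain ⟨Z, hZ⟩ := hsurj ⟨-ρ, hρS⟩
  exact ⟨Z.1, congrArg Subtype.val hZ⟩

/-- The Sylvester equation `(1−t) Zρ + t σZ = −ρ` always admits a solution, which is
unique if and only if at least one of `ρ` and `σ` is invertible. -/
theorem sylvester_exists_unique_iff (ρ σ : Matrix (Fin d) (Fin d) ℂ)
    (hρ : ρ.PosSemidef) (hσ : σ.PosSemidef)
    (hsupp : LinearMap.range ρ.mulVecLin ≤ LinearMap.range σ.mulVecLin)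
    (t : ℝ) (ht : t ∈ Set.Ioc (0 : ℝ) 1) :
    (∃ Z : Matrix (Fin d) (Fin d) ℂ,
      ((1 - t : ℝ) : ℂ) • (Z * ρ) + ((t : ℝ) : ℂ) • (σ * Z) = -ρ) ∧
    ((∃! Z : Matrix (Fin d) (Fin d) ℂ,
        ((1 - t : ℝ) : ℂ) • (Z * ρ) + ((t : ℝ) : ℂ) • (σ * Z) = -ρ) ↔
      (IsUnit ρ ∨ IsUnit σ)) := by
  obtain ⟨Z₀, hZ₀⟩ := sylvester_exists ρ σ hρ hσ hsupp t ht
  refine ⟨⟨Z₀, hZ₀⟩, ?_, ?_⟩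
  · -- uniqueness implies invertibility
    intro hEU
    by_contra hnot
    push_neg at hnot
    obtain ⟨-, hσu⟩ := hnot
    have hninj : ¬ Function.Injective σ.mulVec := fun h =>
      hσu (Matrix.mulVec_injective_iff_isUnit.1 h)
    obtain ⟨a, b, hab, hne⟩ := Function.not_injective_iff.1 hninj
    set v := a - b with hv
    have hv0 : v ≠ 0 := sub_ne_zero.2 hne
    have hσv : σ *ᵥ v = 0 := by rw [hv, Matrix.mulVec_sub, hab, sub_self]
    have hρv : ρ *ᵥ v = 0 := ker_sigma_le_ker_rho hρ hσ hsupp hσv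
    set W := Matrix.vecMulVec v (star v) with hWdef
    have hσW : σ * W = 0 := by
      ext i j
      simp only [Matrix.mul_apply, hWdef, Matrix.vecMulVec_apply, Matrix.zero_apply,
        Pi.star_apply]
      calc ∑ k, σ i k * (v k * star (v j))
          = (∑ k, σ i k * v k) * star (v j) := by
            rw [Finset.sum_mul]; exact Finset.sum_congr rfl fun k _ => by ring
        _ = (σ *ᵥ v) i * star (v j) := rfl
        _ = 0 := by rw [hσv]; simp
    have hWρ : W * ρ = 0 := by
      have hvρ : star v ᵥ* ρ = 0 := by
        calc star v ᵥ* ρ = star v ᵥ* ρᴴ := by rw [hρ.1]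
          _ = star (ρ *ᵥ v) := (Matrix.star_mulVec _ _).symm
          _ = 0 := by rw [hρv]; simp
      ext i j
      simp only [Matrix.mul_apply, hWdef, Matrix.vecMulVec_apply, Matrix.zero_apply,
        Pi.star_apply]
      calc ∑ k, v i * star (v k) * ρ k j
          = v i * ∑ k, star (v k) * ρ k j := by
            rw [Finset.mul_sum]; exact Finset.sum_congr rfl fun k _ => by ring
        _ = v i * (star v ᵥ* ρ) j := rfl
        _ = 0 := by rw [hvρ]; simp
    obtain ⟨Z, hZ, huniq⟩ := hEU
    have hZW : ((1 - t : ℝ) : ℂ) • ((Z + W) * ρ) + ((t : ℝ) : ℂ) • (σ * (Z + W)) = -ρ := by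
      rw [Matrix.add_mul, Matrix.mul_add, hWρ, hσW, add_zero, add_zero]
      exact hZ
    have hW0 : W = 0 := by
      have h := huniq (Z + W) hZW
      have := add_eq_left.1 h
      exact this
    obtain ⟨i, hi⟩ := Function.ne_iff.1 hv0
    have hWii : W i i ≠ 0 := by
      rw [hWdef]
      simp only [Matrix.vecMulVec_apply, Pi.star_apply]
      exact mul_ne_zero (by simpa using hi) (star_ne_zero.2 (by simpa using hi))
    rw [hW0] at hWii
    simp at hWii
  · -- invertibility implies uniqueness
    intro hunit
    have hσu : IsUnit σ := by
      rcases hunit with hu | hu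
      · have hsurjρ : Function.Surjective ρ.mulVec := Matrix.mulVec_surjective_iff_isUnit.2 hu
        refine Matrix.mulVec_surjective_iff_isUnit.1 ?_
        intro w
        obtain ⟨x, hx⟩ := hsurjρ w
        obtain ⟨y, hy⟩ := hsupp (LinearMap.mem_range.2 ⟨x, rfl⟩)
        exact ⟨y, by simpa [Matrix.mulVecLin_apply, hx] using hy⟩
      · exact hu
    refine ⟨Z₀, hZ₀, ?_⟩
    intro Z' hZ'
    have hdiff : ((1 - t : ℝ) : ℂ) • ((Z' - Z₀) * ρ) + ((t : ℝ) : ℂ) • (σ * (Z' - Z₀)) = 0 := by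
      have hexp : ((1 - t : ℝ) : ℂ) • ((Z' - Z₀) * ρ) + ((t : ℝ) : ℂ) • (σ * (Z' - Z₀)) =
          (((1 - t : ℝ) : ℂ) • (Z' * ρ) + ((t : ℝ) : ℂ) • (σ * Z')) -
          (((1 - t : ℝ) : ℂ) • (Z₀ * ρ) + ((t : ℝ) : ℂ) • (σ * Z₀)) := by
        rw [Matrix.sub_mul, Matrix.mul_sub, smul_sub, smul_sub]
        abel
      rw [hexp, hZ', hZ₀, sub_self]
    have hσW : σ * (Z' - Z₀) = 0 := sylvester_ker hρ hσ ht hdiff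
    have hdet : IsUnit σ.det := (Matrix.isUnit_iff_isUnit_det σ).1 hσu
    have hzero : Z' - Z₀ = 0 := by
      have h : Z' - Z₀ = σ⁻¹ * (σ * (Z' - Z₀)) := by
        rw [← Matrix.mul_assoc, Matrix.nonsing_inv_mul σ hdet, Matrix.one_mul]
      rw [hσW, Matrix.mul_zero] at h
      exact h
    exact sub_eq_zero.1 hzero

end QRE
end
end

section
/- Let ρ be a quantum state on ℂ^d, U and V unitary d×d matrices, and i ∈ {1,…,d} with |i⟩ the i-th standard basis vector. Let S be the swap unitary on ℂ^d ⊗ ℂ^d (S(u⊗v) = v⊗u), let W := (U⊗I)·S·(V⊗I), let H be the 2×2 Hadamard matrix, and let χ := (H⊗I_{d²}) · (|0⟩⟨0|⊗I_{d²} + |1⟩⟨1|⊗W) · (H⊗I_{d²}), a unitary on ℂ² ⊗ ℂ^d ⊗ ℂ^d. Then 2·tr[ (|0⟩⟨0|⊗I_{d²}) · χ · (|0⟩⟨0| ⊗ ρ ⊗ |i⟩⟨i|) · χ† ] − 1 = Re tr[ρ · U|i⟩⟨i|V]. -/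
noncomputable section

namespace QRE

open scoped ComplexOrder

open Matrix

variable {d : ℕ}

open scoped Kronecker

/-- The Hadamard matrix `H = (1/√2)·[[1,1],[1,−1]]`. -/
def Hadamard : Matrix (Fin 2) (Fin 2) ℂ :=
  ((Real.sqrt 2 : ℝ) : ℂ)⁻¹ • !![1, 1; 1, -1]

/-- The swap unitary on `ℂ^d ⊗ ℂ^d`: `S(u⊗v) = v⊗u`. -/
def swapMatrix : Matrix (Fin d × Fin d) (Fin d × Fin d) ℂ :=
  Matrix.of fun p q => if p.1 = q.2 ∧ p.2 = q.1 then 1 else 0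


set_option maxRecDepth 8000 in
lemma kronCT {m n : Type*} (A : Matrix m m ℂ) (B : Matrix n n ℂ) : (A ⊗ₖ B)ᴴ = Aᴴ ⊗ₖ Bᴴ := by
  ext ⟨a,b⟩ ⟨c,e⟩
  simp [Matrix.conjTranspose_apply, mul_comm]

lemma stdCT {n : Type*} [DecidableEq n] (i : n) :
    (Matrix.single i i (1:ℂ))ᴴ = Matrix.single i i 1 := by
  ext a b
  simp only [Matrix.conjTranspose_apply, Matrix.single, Matrix.of_apply, apply_ite,
    star_one, star_zero]
  by_cases h1 : i = a <;> by_cases h2 : i = b <;> simp [h1, h2]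

lemma swapCT : (swapMatrix (d := d))ᴴ = swapMatrix := by
  ext ⟨a,b⟩ ⟨c,e⟩
  simp only [Matrix.conjTranspose_apply, swapMatrix, Matrix.of_apply, apply_ite, star_one, star_zero]
  simp only [show ∀ (x y : Fin d), (x = y) = (y = x) from fun x y => by simp [eq_comm]]
  split <;> simp_all [and_comm]

lemma swap_mul_swap : (swapMatrix (d := d)) * swapMatrix = 1 := by
  ext ⟨a,b⟩ ⟨c,e⟩
  simp [Matrix.mul_apply, swapMatrix, Fintype.sum_prod_type, Matrix.one_apply, Prod.ext_iff,
    ite_and, Finset.sum_ite_eq, Finset.sum_ite_eq', and_comm]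

lemma trace_swap_kron (A B : Matrix (Fin d) (Fin d) ℂ) :
    Matrix.trace (swapMatrix * (A ⊗ₖ B)) = Matrix.trace (A * B) := by
  simp only [Matrix.trace, Matrix.diag, Matrix.mul_apply, swapMatrix, Matrix.of_apply,
    Matrix.kroneckerMap_apply, Fintype.sum_prod_type, ite_mul, one_mul, zero_mul, Prod.mk.injEq]
  rw [Finset.sum_comm]
  simp [ite_and, Finset.sum_ite_eq, Finset.sum_ite_eq', mul_comm]

lemma trW (ρ U V E : Matrix (Fin d) (Fin d) ℂ) :
    Matrix.trace ((U ⊗ₖ (1 : Matrix (Fin d) (Fin d) ℂ)) * swapMatrix * (V ⊗ₖ 1) * (ρ ⊗ₖ E)) =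
      Matrix.trace (ρ * (U * E * V)) := by
  rw [Matrix.mul_assoc (U ⊗ₖ (1 : Matrix (Fin d) (Fin d) ℂ) * swapMatrix) (V ⊗ₖ 1) (ρ ⊗ₖ E),
    ← Matrix.mul_kronecker_mul, Matrix.one_mul,
    Matrix.mul_assoc (U ⊗ₖ (1 : Matrix (Fin d) (Fin d) ℂ)) swapMatrix _,
    Matrix.trace_mul_comm, Matrix.mul_assoc, ← Matrix.mul_kronecker_mul, Matrix.mul_one,
    trace_swap_kron, Matrix.mul_assoc V ρ U, Matrix.mul_assoc V (ρ * U) E,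
    Matrix.trace_mul_comm, Matrix.mul_assoc (ρ * U) E V, Matrix.mul_assoc ρ U (E * V),
    ← Matrix.mul_assoc U E V]

lemma Wunit (U V : Matrix (Fin d) (Fin d) ℂ)
    (hU : U ∈ Matrix.unitaryGroup (Fin d) ℂ) (hV : V ∈ Matrix.unitaryGroup (Fin d) ℂ) :
    ((U ⊗ₖ (1 : Matrix (Fin d) (Fin d) ℂ)) * swapMatrix * (V ⊗ₖ 1))ᴴ *
      ((U ⊗ₖ (1 : Matrix (Fin d) (Fin d) ℂ)) * swapMatrix * (V ⊗ₖ 1)) = 1 := by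
  have hU' : Uᴴ * U = 1 := by
    have := (Matrix.mem_unitaryGroup_iff').mp hU
    rwa [Matrix.star_eq_conjTranspose] at this
  have hV' : Vᴴ * V = 1 := by
    have := (Matrix.mem_unitaryGroup_iff').mp hV
    rwa [Matrix.star_eq_conjTranspose] at this
  have h1 : (Uᴴ ⊗ₖ (1 : Matrix (Fin d) (Fin d) ℂ)) * (U ⊗ₖ 1) = 1 := by
    rw [← Matrix.mul_kronecker_mul, hU', Matrix.one_mul, Matrix.one_kronecker_one]
  have h2 : (Vᴴ ⊗ₖ (1 : Matrix (Fin d) (Fin d) ℂ)) * (V ⊗ₖ 1) = 1 := by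
    rw [← Matrix.mul_kronecker_mul, hV', Matrix.one_mul, Matrix.one_kronecker_one]
  rw [Matrix.conjTranspose_mul, Matrix.conjTranspose_mul, swapCT, kronCT, kronCT,
    Matrix.conjTranspose_one]
  simp only [← Matrix.mul_assoc]
  rw [Matrix.mul_assoc ((Vᴴ ⊗ₖ (1 : Matrix (Fin d) (Fin d) ℂ)) * swapMatrix) _ _, h1,
    Matrix.mul_one, Matrix.mul_assoc (Vᴴ ⊗ₖ (1 : Matrix (Fin d) (Fin d) ℂ)) swapMatrix swapMatrix,
    swap_mul_swap, Matrix.mul_one, h2]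

lemma sqrt2_sq : (((Real.sqrt 2 : ℝ) : ℂ))⁻¹ * (((Real.sqrt 2 : ℝ) : ℂ))⁻¹ = 2⁻¹ := by
  have h : Real.sqrt 2 * Real.sqrt 2 = 2 := Real.mul_self_sqrt (by norm_num)
  calc (((Real.sqrt 2 : ℝ) : ℂ))⁻¹ * (((Real.sqrt 2 : ℝ) : ℂ))⁻¹
      = (((Real.sqrt 2 * Real.sqrt 2 : ℝ) : ℂ))⁻¹ := by push_cast; rw [mul_inv]
    _ = 2⁻¹ := by rw [h]; norm_num

lemma hadCT : Hadamardᴴ = Hadamard := by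
  rw [Hadamard, Matrix.conjTranspose_smul]
  congr 1
  · simp
  · ext a b
    fin_cases a <;> fin_cases b <;>
      simp [Matrix.conjTranspose_apply]

set_option maxRecDepth 8000 in
lemma t2 (P Q : Matrix (Fin 2) (Fin 2) ℂ)
    (hP : P = Matrix.single 0 0 1 ∨ P = Matrix.single 1 1 1)
    (hQ : Q = Matrix.single 0 0 1 ∨ Q = Matrix.single 1 1 1) :
    Matrix.trace (Matrix.single (0:Fin 2) 0 (1:ℂ) * Hadamard * P * Hadamard *
      Matrix.single (0:Fin 2) 0 (1:ℂ) * Hadamard * Q * Hadamard) = 1/4 := by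
  rcases hP with rfl | rfl <;> rcases hQ with rfl | rfl <;>
  · simp only [Matrix.trace_fin_two, Matrix.mul_apply, Fin.sum_univ_two, Hadamard,
      Matrix.smul_apply, Matrix.single, Matrix.of_apply, Matrix.cons_val',
      Matrix.cons_val_zero, Matrix.cons_val_one, Matrix.head_cons, Matrix.head_fin_const,
      Matrix.empty_val', Matrix.cons_val_fin_one, smul_eq_mul]
    norm_num
    ring_nf
    rw [show ((Real.sqrt 2:ℝ):ℂ)⁻¹^4 = (((Real.sqrt 2:ℝ):ℂ)⁻¹*((Real.sqrt 2:ℝ):ℂ)⁻¹)*(((Real.sqrt 2:ℝ):ℂ)⁻¹*((Real.sqrt 2:ℝ):ℂ)⁻¹) by ring, sqrt2_sq]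
    norm_num

/-- The Hadamard-test identity for the extended SWAP test (case `p = 1`):
`2 tr[(|0⟩⟨0|⊗I) χ (|0⟩⟨0| ⊗ ρ ⊗ |i⟩⟨i|) χ†] − 1 = Re tr[ρ U|i⟩⟨i|V]`. -/
theorem extended_swap_test (ρ : Matrix (Fin d) (Fin d) ℂ) (hρ : IsState ρ)
    (U V : Matrix (Fin d) (Fin d) ℂ)
    (hU : U ∈ Matrix.unitaryGroup (Fin d) ℂ)
    (hV : V ∈ Matrix.unitaryGroup (Fin d) ℂ) (i : Fin d) :
    2 * (Matrix.trace
        ((Matrix.single (0 : Fin 2) (0 : Fin 2) (1 : ℂ) ⊗ₖ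
            (1 : Matrix (Fin d × Fin d) (Fin d × Fin d) ℂ)) *
          ((Hadamard ⊗ₖ (1 : Matrix (Fin d × Fin d) (Fin d × Fin d) ℂ)) *
            (Matrix.single (0 : Fin 2) (0 : Fin 2) (1 : ℂ) ⊗ₖ
                (1 : Matrix (Fin d × Fin d) (Fin d × Fin d) ℂ) +
              Matrix.single (1 : Fin 2) (1 : Fin 2) (1 : ℂ) ⊗ₖ
                ((U ⊗ₖ (1 : Matrix (Fin d) (Fin d) ℂ)) * swapMatrix *
                  (V ⊗ₖ (1 : Matrix (Fin d) (Fin d) ℂ)))) *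
            (Hadamard ⊗ₖ (1 : Matrix (Fin d × Fin d) (Fin d × Fin d) ℂ))) *
          (Matrix.single (0 : Fin 2) (0 : Fin 2) (1 : ℂ) ⊗ₖ
            (ρ ⊗ₖ Matrix.single i i (1 : ℂ))) *
          ((Hadamard ⊗ₖ (1 : Matrix (Fin d × Fin d) (Fin d × Fin d) ℂ)) *
            (Matrix.single (0 : Fin 2) (0 : Fin 2) (1 : ℂ) ⊗ₖ
                (1 : Matrix (Fin d × Fin d) (Fin d × Fin d) ℂ) +
              Matrix.single (1 : Fin 2) (1 : Fin 2) (1 : ℂ) ⊗ₖ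
                ((U ⊗ₖ (1 : Matrix (Fin d) (Fin d) ℂ)) * swapMatrix *
                  (V ⊗ₖ (1 : Matrix (Fin d) (Fin d) ℂ)))) *
            (Hadamard ⊗ₖ (1 : Matrix (Fin d × Fin d) (Fin d × Fin d) ℂ)))ᴴ)).re - 1 =
      (Matrix.trace (ρ * (U * Matrix.single i i (1 : ℂ) * V))).re := by
  obtain ⟨hpsd, htr⟩ := hρ
  set E : Matrix (Fin d) (Fin d) ℂ := Matrix.single i i (1:ℂ) with hE
  set W : Matrix (Fin d × Fin d) (Fin d × Fin d) ℂ :=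
    (U ⊗ₖ (1 : Matrix (Fin d) (Fin d) ℂ)) * swapMatrix *
      (V ⊗ₖ (1 : Matrix (Fin d) (Fin d) ℂ)) with hWdef
  have hXct : (ρ ⊗ₖ E)ᴴ = ρ ⊗ₖ E := by
    rw [kronCT, hpsd.1.eq, hE, stdCT]
  have hT0 : Matrix.trace (ρ ⊗ₖ E) = 1 := by
    rw [Matrix.trace_kronecker, htr, hE, Matrix.trace_single_eq_same, one_mul]
  have hTW : Matrix.trace (W * (ρ ⊗ₖ E)) = Matrix.trace (ρ * (U * E * V)) := by
    rw [hWdef, trW]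
  have hTWd : Matrix.trace ((ρ ⊗ₖ E) * Wᴴ) = star (Matrix.trace (ρ * (U * E * V))) := by
    have h := Matrix.conjTranspose_mul W (ρ ⊗ₖ E)
    rw [hXct] at h
    rw [← h, Matrix.trace_conjTranspose, hTW]
  have hEtr : E.trace = 1 := by rw [hE]; exact Matrix.trace_single_eq_same i (1:ℂ)
  have hu : Wᴴ * W = 1 := by
    have hu0 := Wunit U V hU hV
    rwa [← hWdef] at hu0
  have hTWW : Matrix.trace (W * (ρ ⊗ₖ E) * Wᴴ) = 1 := by
    rw [Matrix.trace_mul_cycle, hu, Matrix.one_mul, hT0]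
  simp only [Matrix.conjTranspose_mul, Matrix.conjTranspose_add, kronCT, hadCT, stdCT,
    Matrix.conjTranspose_one]
  simp only [Matrix.mul_add, Matrix.add_mul, ← Matrix.mul_assoc,
    ← Matrix.mul_kronecker_mul, Matrix.one_mul, Matrix.mul_one]
  simp only [Matrix.trace_add, Matrix.trace_kronecker]
  rw [t2 _ _ (Or.inl rfl) (Or.inl rfl), t2 _ _ (Or.inl rfl) (Or.inr rfl),
    t2 _ _ (Or.inr rfl) (Or.inl rfl), t2 _ _ (Or.inr rfl) (Or.inr rfl)]
  rw [htr, hEtr, hTW, hTWd, hTWW]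
  set z := Matrix.trace (ρ * (U * E * V)) with hz
  rw [show (1/4*((1:ℂ)*1) + 1/4*z + (1/4*(star z) + 1/4*1)) = 1/2 + 1/4*(z + star z) from by ring]
  rw [Complex.star_def, Complex.add_conj]
  simp [Complex.add_re, Complex.ofReal_re]
  rw [hz, ← Matrix.mul_assoc ρ (U * E) V, ← Matrix.mul_assoc ρ U E]
  ring

end QRE
end
end
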